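/- arXiv:2207.07984 — 3 statements merged into one kernel-verified Lean document; each statement's English description precedes it below -/
import Mathlib

section
/- An RSCF φ : 𝒟^n → Δ(A) is unanimous, strategy-proof and group-wise anonymous if and only if it is a probabilistic fixed group ballot rule. -/
open Finset

/-! ### Preferences and the single-peaked domain -/

/-- A strict preference over the `m+1` alternatives `Fin (m+1)`:
`P k` is the alternative ranked `k`-th (`0`-indexed, so `P 0` is the top). -/
abbrev Pref (m : ℕ) := Equiv.Perm (Fin (m + 1))

/-- Single-peakedness w.r.t. the prior linear order on `Fin (m+1)`. -/
def SinglePeaked {m : ℕ} (P : Pref m) : Prop :=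
  ∀ a b : Fin (m + 1), ((P 0 ≤ a ∧ a < b) ∨ (b < a ∧ a ≤ P 0)) → P.symm a < P.symm b

/-- The single-peaked domain `𝒟`. -/
abbrev SPPref (m : ℕ) := {P : Pref m // SinglePeaked P}

/-- Top-ranked alternative of a preference. -/
def peak {m : ℕ} (P : SPPref m) : Fin (m + 1) := P.val 0

/-- The upper contour set `U(a, P)` of the alternative `a` at `P`. -/
def UC {m : ℕ} (P : SPPref m) (a : Fin (m + 1)) : Finset (Fin (m + 1)) :=
  univ.filter fun b => P.val.symm b ≤ P.val.symm a

/-- The set of the `k` top-ranked alternatives of `P`, i.e. `U(P(k), P)`. -/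
def topSet {m : ℕ} (P : SPPref m) (k : ℕ) : Finset (Fin (m + 1)) :=
  univ.filter fun b => (P.val.symm b : ℕ) < k

/-- A profile of single-peaked preferences, one for each of the `n` agents. -/
abbrev Profile (m n : ℕ) := Fin n → SPPref m

/-- A random social choice function, recorded via its probabilities. -/
abbrev RSCF (m n : ℕ) := Profile m n → Fin (m + 1) → ℝ

def IsProb {m : ℕ} (p : Fin (m + 1) → ℝ) : Prop :=
  (∀ a, 0 ≤ p a) ∧ ∑ a, p a = 1

/-- `φ` genuinely maps into `Δ(A)`. -/
def IsRSCF {m n : ℕ} (φ : RSCF m n) : Prop := ∀ P, IsProb (φ P)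

/-- `φ_B(P)`, the probability of the set `B` at profile `P`. -/
def probOn {m n : ℕ} (φ : RSCF m n) (P : Profile m n) (B : Finset (Fin (m + 1))) : ℝ :=
  ∑ b ∈ B, φ P b

def Unanimous {m n : ℕ} (φ : RSCF m n) : Prop :=
  ∀ (P : Profile m n) (a : Fin (m + 1)), (∀ i, peak (P i) = a) → φ P a = 1

def StrategyProof {m n : ℕ} (φ : RSCF m n) : Prop :=
  ∀ (i : Fin n) (P : Profile m n) (P' : SPPref m) (a : Fin (m + 1)),
    probOn φ (Function.update P i P') (UC (P i) a) ≤ probOn φ P (UC (P i) a)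

def Anonymous {m n : ℕ} (φ : RSCF m n) : Prop :=
  ∀ (σ : Equiv.Perm (Fin n)) (P : Profile m n), φ P = φ fun i => P (σ i)

/-! ### Deterministic social choice functions -/

def DUnanimous {m n : ℕ} (f : Profile m n → Fin (m + 1)) : Prop :=
  ∀ (P : Profile m n) (a : Fin (m + 1)), (∀ i, peak (P i) = a) → f P = a

def DStrategyProof {m n : ℕ} (f : Profile m n → Fin (m + 1)) : Prop :=
  ∀ (i : Fin n) (P : Profile m n) (P' : SPPref m) (a : Fin (m + 1)),
    f (Function.update P i P') ∈ UC (P i) a → f P ∈ UC (P i) a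

/-! ### Probabilistic fixed ballot rules -/

def IsPFBRWith {m n : ℕ} (β : Finset (Fin n) → Fin (m + 1) → ℝ) (φ : RSCF m n) : Prop :=
  (∀ S, IsProb (β S)) ∧
  β ∅ (Fin.last m) = 1 ∧
  β univ 0 = 1 ∧
  (∀ S T : Finset (Fin n), S ⊆ T → ∀ t : Fin (m + 1),
    ∑ b ∈ Iic t, β S b ≤ ∑ b ∈ Iic t, β T b) ∧
  ∀ (P : Profile m n) (t : Fin (m + 1)),
    φ P t = (∑ b ∈ Iic t, β (univ.filter fun i => peak (P i) ≤ t) b)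
          - ∑ b ∈ Iio t, β (univ.filter fun i => peak (P i) < t) b

def IsPFBR {m n : ℕ} (φ : RSCF m n) : Prop := ∃ β, IsPFBRWith β φ

/-! ### Min-max rules -/

def minmaxOutcome {m n : ℕ} (β : Finset (Fin n) → Fin (m + 1)) (P : Profile m n) :
    Fin (m + 1) :=
  (univ : Finset (Finset (Fin n))).inf' univ_nonempty fun S =>
    (insert (β S) (S.image fun i => peak (P i))).max' (insert_nonempty _ _)

def MinMaxParams {m n : ℕ} (β : Finset (Fin n) → Fin (m + 1)) : Prop :=
  β ∅ = Fin.last m ∧ β univ = 0 ∧ ∀ S T : Finset (Fin n), S ⊆ T → β T ≤ β S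

def IsMinMax {m n : ℕ} (f : Profile m n → Fin (m + 1)) : Prop :=
  ∃ β, MinMaxParams β ∧ ∀ P, f P = minmaxOutcome β P

/-- `φ` is the mixture of the deterministic rules `F w` with weights `lam w`. -/
def IsMixture {m n : ℕ} (φ : RSCF m n) (k : ℕ) (lam : Fin k → ℝ)
    (F : Fin k → Profile m n → Fin (m + 1)) : Prop :=
  (∀ w, 0 ≤ lam w) ∧ (∑ w, lam w = 1) ∧
  ∀ P a, φ P a = ∑ w, lam w * (if F w P = a then (1 : ℝ) else 0)

/-! ### Groups -/

/-- Size of the group `q` of the partition described by `grp`. -/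
def gsize {n g : ℕ} (grp : Fin n → Fin g) (q : Fin g) : ℕ :=
  (univ.filter fun i => grp i = q).card

lemma count_le_n {n : ℕ} (p : Fin n → Prop) [DecidablePred p] :
    (univ.filter p).card ≤ n := by
  simpa using card_filter_le (univ : Finset (Fin n)) p

/-- Membership in `Γ`: each component is at most the size of the corresponding group. -/
def GammaValid {n g : ℕ} (grp : Fin n → Fin g) (γ : Fin g → Fin (n + 1)) : Prop :=
  ∀ q, (γ q : ℕ) ≤ gsize grp q

/-- The maximal element `γ̄` of `Γ`. -/
def gammaTop {n g : ℕ} (grp : Fin n → Fin g) : Fin g → Fin (n + 1) :=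
  fun q => ⟨gsize grp q, Nat.lt_succ_of_le (count_le_n _)⟩

/-- `α(t; P)`: componentwise, the number of agents of each group whose peak is `≤ t`. -/
def alphaVec {m n g : ℕ} (grp : Fin n → Fin g) (P : Profile m n) (t : Fin (m + 1)) :
    Fin g → Fin (n + 1) := fun q =>
  ⟨(univ.filter fun i => grp i = q ∧ peak (P i) ≤ t).card, Nat.lt_succ_of_le (count_le_n _)⟩

/-- `α(t-1; P)` in zero-indexed form: agents of each group whose peak is `< t`. -/
def alphaLtVec {m n g : ℕ} (grp : Fin n → Fin g) (P : Profile m n) (t : Fin (m + 1)) :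
    Fin g → Fin (n + 1) := fun q =>
  ⟨(univ.filter fun i => grp i = q ∧ peak (P i) < t).card, Nat.lt_succ_of_le (count_le_n _)⟩

def GroupAnon {m n g : ℕ} (grp : Fin n → Fin g) (φ : RSCF m n) : Prop :=
  ∀ π : Equiv.Perm (Fin n), (∀ i, grp (π i) = grp i) →
    ∀ P : Profile m n, φ P = φ fun i => P (π i)

def DGroupAnon {m n g : ℕ} (grp : Fin n → Fin g) (f : Profile m n → Fin (m + 1)) : Prop :=
  ∀ π : Equiv.Perm (Fin n), (∀ i, grp (π i) = grp i) →
    ∀ P : Profile m n, f P = f fun i => P (π i)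

/-! ### Probabilistic fixed group ballot rules -/

def IsPFGBRWith {m n g : ℕ} (grp : Fin n → Fin g)
    (β : (Fin g → Fin (n + 1)) → Fin (m + 1) → ℝ) (φ : RSCF m n) : Prop :=
  (∀ γ, GammaValid grp γ → IsProb (β γ)) ∧
  β (fun _ => 0) (Fin.last m) = 1 ∧
  β (gammaTop grp) 0 = 1 ∧
  (∀ γ γ', GammaValid grp γ → GammaValid grp γ' → (∀ q, γ' q ≤ γ q) →
    ∀ t : Fin (m + 1), ∑ b ∈ Iic t, β γ' b ≤ ∑ b ∈ Iic t, β γ b) ∧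
  ∀ (P : Profile m n) (t : Fin (m + 1)),
    φ P t = (∑ b ∈ Iic t, β (alphaVec grp P t) b) - ∑ b ∈ Iio t, β (alphaLtVec grp P t) b

def IsPFGBR {m n g : ℕ} (grp : Fin n → Fin g) (φ : RSCF m n) : Prop :=
  ∃ β, IsPFGBRWith grp β φ

/-! ### Group min-max rules -/

/-- `τ_t(P_{N_q})` : the `t`-th smallest peak of group `q` (`τ_0 = a_1`). -/
def tau {m n g : ℕ} (grp : Fin n → Fin g) (P : Profile m n) (q : Fin g) (t : ℕ) :
    Fin (m + 1) :=
  ((0 : Fin (m + 1)) ::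
    Multiset.sort
      ((univ.filter fun i => grp i = q).val.map fun i => peak (P i)) (· ≤ ·)).getD t 0

/-- `Γ` as a finite set. -/
def gammaSet {n g : ℕ} (grp : Fin n → Fin g) : Finset (Fin g → Fin (n + 1)) :=
  univ.filter fun γ => ∀ q, (γ q : ℕ) ≤ gsize grp q

lemma gammaSet_nonempty {n g : ℕ} (grp : Fin n → Fin g) : (gammaSet grp).Nonempty :=
  ⟨fun _ => 0, by simp [gammaSet]⟩

/-- Outcome of the group min-max rule with parameters `β`. -/
def gmmrOutcome {m n g : ℕ} (grp : Fin n → Fin g)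
    (β : (Fin g → Fin (n + 1)) → Fin (m + 1)) (P : Profile m n) : Fin (m + 1) :=
  (gammaSet grp).inf' (gammaSet_nonempty grp) fun γ =>
    (insert (β γ) (univ.image fun q => tau grp P q ((γ q : ℕ)))).max' (insert_nonempty _ _)

def GMMRParams {m n g : ℕ} (grp : Fin n → Fin g)
    (β : (Fin g → Fin (n + 1)) → Fin (m + 1)) : Prop :=
  β (fun _ => 0) = Fin.last m ∧ β (gammaTop grp) = 0 ∧
  ∀ γ γ', GammaValid grp γ → GammaValid grp γ' → (∀ q, γ' q ≤ γ q) → β γ ≤ β γ'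

def IsGMMR {m n g : ℕ} (grp : Fin n → Fin g) (f : Profile m n → Fin (m + 1)) : Prop :=
  ∃ β, GMMRParams grp β ∧ ∀ P, f P = gmmrOutcome grp β P

/-! ### Representation scenarios and group fairness -/

/-- A preference profile of the members of group `q`. -/
abbrev GrpProfile (m : ℕ) {n g : ℕ} (grp : Fin n → Fin g) (q : Fin g) :=
  {i : Fin n // grp i = q} → SPPref m

/-- Restriction of a profile to the members of group `q`. -/
def restrict {m n g : ℕ} (grp : Fin n → Fin g) (P : Profile m n) (q : Fin g) :
    GrpProfile m grp q := fun i => P i.val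

/-- A representation scenario: a representative function for each group. -/
abbrev RepScenario (m : ℕ) {n g : ℕ} (grp : Fin n → Fin g) :=
  (q : Fin g) → GrpProfile m grp q → Finset (Fin (m + 1))

def TopRanged {m n g : ℕ} (grp : Fin n → Fin g) (ψ : RepScenario m grp) (q : Fin g) : Prop :=
  ∀ Pq : GrpProfile m grp q, ∃ a ∈ ψ q Pq, ∃ i j : {i : Fin n // grp i = q},
    peak (Pq i) ≤ a ∧ a ≤ peak (Pq j)

/-- `ψ` is compliant with `κ`: each `ψ q` is top-ranged and always selects an
interval of exactly `κ q` consecutive alternatives. -/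
def Compliant {m n g : ℕ} (grp : Fin n → Fin g) (κ : Fin g → ℕ)
    (ψ : RepScenario m grp) : Prop :=
  ∀ q, TopRanged grp ψ q ∧ ∀ Pq, ∃ x y : Fin (m + 1),
    x ≤ y ∧ (y : ℕ) + 1 = (x : ℕ) + κ q ∧ ψ q Pq = Finset.Icc x y

def GroupWeakFair {m n g : ℕ} (grp : Fin n → Fin g) (ψ : RepScenario m grp)
    (η : Fin g → ℝ) (φ : RSCF m n) : Prop :=
  ∀ (P : Profile m n) (q : Fin g), η q ≤ probOn φ P (ψ q (restrict grp P q))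

def GroupStrongFair {m n g : ℕ} (grp : Fin n → Fin g) (ψ : RepScenario m grp)
    (η : Fin g → ℝ) (φ : RSCF m n) : Prop :=
  ∀ (P : Profile m n) (q : Fin g), ∃ a ∈ ψ q (restrict grp P q), η q ≤ φ P a

/-- `a` is feasible at `(z₁, z₂; ψ q)`. -/
def FeasibleAt {m n g : ℕ} (grp : Fin n → Fin g) (ψ : RepScenario m grp) (q : Fin g)
    (a : Fin (m + 1)) (z₁ z₂ : ℕ) : Prop :=
  ∃ (Pq : GrpProfile m grp q) (c : Fin (m + 1)),
    a ∈ ψ q Pq ∧ (∀ b ∈ ψ q Pq, a ≤ b) ∧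
    c ∈ ψ q Pq ∧ (∀ b ∈ ψ q Pq, b ≤ c) ∧
    (univ.filter fun i : {i : Fin n // grp i = q} => peak (Pq i) < a).card = z₁ ∧
    (univ.filter fun i : {i : Fin n // grp i = q} => c < peak (Pq i)).card = gsize grp q - z₂

/-- The set `{a_x, …, a_{x+k-1}}` is feasible at `(z 0, …, z k; ψ q)`. -/
def SetFeasibleAt {m n g : ℕ} (grp : Fin n → Fin g) (ψ : RepScenario m grp) (q : Fin g)
    (x : Fin (m + 1)) (k : ℕ) (z : Fin (k + 1) → ℕ) : Prop :=
  ∃ Pq : GrpProfile m grp q,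
    x ∈ ψ q Pq ∧ (∀ b ∈ ψ q Pq, x ≤ b) ∧
    (univ.filter fun i : {i : Fin n // grp i = q} => peak (Pq i) < x).card = z 0 ∧
    ∀ j : Fin k, (univ.filter fun i : {i : Fin n // grp i = q} =>
      (peak (Pq i) : ℕ) ≤ (x : ℕ) + (j : ℕ)).card = z j.succ

/-! ### Individual fairness -/

def IndWeakFair {m n : ℕ} (κ : Fin n → ℕ) (η : Fin n → ℝ) (φ : RSCF m n) : Prop :=
  ∀ (P : Profile m n) (i : Fin n), η i ≤ probOn φ P (topSet (P i) (κ i))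

def IndStrongFair {m n : ℕ} (κ : Fin n → ℕ) (η : Fin n → ℝ) (φ : RSCF m n) : Prop :=
  ∀ (P : Profile m n) (i : Fin n), ∃ a ∈ topSet (P i) (κ i), η i ≤ φ P a

/-! ### Median rules -/

/-- The median of the `n` peaks and the `n+1` parameters `β 0, …, β n`. -/
def medianOutcome {m n : ℕ} (β : Fin (n + 1) → Fin (m + 1)) (P : Profile m n) :
    Fin (m + 1) :=
  (Multiset.sort
    ((univ.val.map fun i : Fin n => peak (P i)) +
      (univ.val.map fun j : Fin (n + 1) => β j)) (· ≤ ·)).getD n 0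

def MedianParams {m n : ℕ} (β : Fin (n + 1) → Fin (m + 1)) : Prop :=
  β 0 = 0 ∧ β (Fin.last n) = Fin.last m ∧ Monotone β
section Basic
variable {m : ℕ}

lemma peak_mem_UC (P : SPPref m) (a : Fin (m+1)) : peak P ∈ UC P a := by
  simp only [UC, mem_filter, mem_univ, true_and, peak]
  simp

lemma mem_UC_self (P : SPPref m) (a : Fin (m+1)) : a ∈ UC P a := by
  simp [UC]

/-- `UC` is an interval: betweenness. -/
lemma UC_between (P : SPPref m) (a : Fin (m+1)) {b c d : Fin (m+1)}
    (hb : b ∈ UC P a) (hd : d ∈ UC P a) (h1 : b ≤ c) (h2 : c ≤ d) : c ∈ UC P a := by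
  simp only [UC, mem_filter, mem_univ, true_and] at *
  rcases le_or_gt (peak P) c with hc | hc
  · rcases eq_or_lt_of_le h2 with rfl | h2
    · exact hd
    · exact le_of_lt (lt_of_lt_of_le (P.2 c d (Or.inl ⟨hc, h2⟩)) hd)
  · rcases eq_or_lt_of_le h1 with rfl | h1
    · exact hb
    · exact le_of_lt (lt_of_lt_of_le (P.2 c b (Or.inr ⟨h1, le_of_lt hc⟩)) hb)

lemma UC_nonempty (P : SPPref m) (a : Fin (m+1)) : (UC P a).Nonempty :=
  ⟨a, mem_UC_self P a⟩

lemma UC_eq_Icc (P : SPPref m) (a : Fin (m+1)) :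
    UC P a = Finset.Icc ((UC P a).min' (UC_nonempty P a)) ((UC P a).max' (UC_nonempty P a)) := by
  ext c
  constructor
  · intro hc
    exact Finset.mem_Icc.2 ⟨Finset.min'_le _ _ hc, Finset.le_max' _ _ hc⟩
  · intro hc
    rcases Finset.mem_Icc.1 hc with ⟨h1, h2⟩
    exact UC_between P a (Finset.min'_mem _ _) (Finset.max'_mem _ _) h1 h2

lemma UC_min'_le_peak (P : SPPref m) (a : Fin (m+1)) :
    (UC P a).min' (UC_nonempty P a) ≤ peak P := Finset.min'_le _ _ (peak_mem_UC P a)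

lemma peak_le_UC_max' (P : SPPref m) (a : Fin (m+1)) :
    peak P ≤ (UC P a).max' (UC_nonempty P a) := Finset.le_max' _ _ (peak_mem_UC P a)

/-- If `peak P ≤ y` then `UC P y` has max exactly `y`. -/
lemma UC_max'_eq (P : SPPref m) {y : Fin (m+1)} (hy : peak P ≤ y) :
    (UC P y).max' (UC_nonempty P y) = y := by
  apply le_antisymm
  · by_contra h
    push_neg at h
    have hmem := Finset.max'_mem (UC P y) (UC_nonempty P y)
    simp only [UC, mem_filter, mem_univ, true_and] at hmem
    have := P.2 y _ (Or.inl ⟨hy, h⟩)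
    exact absurd (lt_of_lt_of_le this hmem) (lt_irrefl _)
  · exact Finset.le_max' _ _ (mem_UC_self P y)

lemma UC_min'_eq (P : SPPref m) {x : Fin (m+1)} (hx : x ≤ peak P) :
    (UC P x).min' (UC_nonempty P x) = x := by
  apply le_antisymm
  · exact Finset.min'_le _ _ (mem_UC_self P x)
  · by_contra h
    push_neg at h
    have hmem := Finset.min'_mem (UC P x) (UC_nonempty P x)
    simp only [UC, mem_filter, mem_univ, true_and] at hmem
    have := P.2 x _ (Or.inr ⟨h, hx⟩)
    exact absurd (lt_of_lt_of_le this hmem) (lt_irrefl _)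

/-- `UC P y = Icc l y` for some `l ≤ peak P`, when `peak P ≤ y`. -/
lemma UC_left_form (P : SPPref m) {y : Fin (m+1)} (hy : peak P ≤ y) :
    ∃ l, l ≤ peak P ∧ UC P y = Finset.Icc l y := by
  refine ⟨(UC P y).min' (UC_nonempty P y), UC_min'_le_peak P y, ?_⟩
  conv_lhs => rw [UC_eq_Icc P y]
  rw [UC_max'_eq P hy]

lemma UC_right_form (P : SPPref m) {x : Fin (m+1)} (hx : x ≤ peak P) :
    ∃ r, peak P ≤ r ∧ UC P x = Finset.Icc x r := by
  refine ⟨(UC P x).max' (UC_nonempty P x), peak_le_UC_max' P x, ?_⟩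
  conv_lhs => rw [UC_eq_Icc P x]
  rw [UC_min'_eq P hx]

end Basic
section Extreme
variable {m : ℕ}

/-- ranking function of the left-leaning preference with peak `y`:
`y ≻ y-1 ≻ ⋯ ≻ 0 ≻ y+1 ≻ ⋯ ≻ m`. -/
def mtFun (y : Fin (m+1)) (k : Fin (m+1)) : Fin (m+1) :=
  if (k:ℕ) ≤ (y:ℕ) then ⟨(y:ℕ) - (k:ℕ), lt_of_le_of_lt (Nat.sub_le _ _) y.isLt⟩ else k

lemma mtFun_invol (y : Fin (m+1)) : Function.Involutive (mtFun y) := by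
  intro k
  by_cases h : (k:ℕ) ≤ (y:ℕ)
  · have e1 : mtFun y k = ⟨(y:ℕ) - (k:ℕ), lt_of_le_of_lt (Nat.sub_le _ _) y.isLt⟩ := if_pos h
    rw [e1]
    have e2 : mtFun y ⟨(y:ℕ) - (k:ℕ), lt_of_le_of_lt (Nat.sub_le _ _) y.isLt⟩
        = ⟨(y:ℕ) - ((y:ℕ) - (k:ℕ)), lt_of_le_of_lt (Nat.sub_le _ _) y.isLt⟩ :=
      if_pos (Nat.sub_le _ _)
    rw [e2]
    ext
    simp only [Fin.val_mk]
    omega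
  · have e1 : mtFun y k = k := if_neg h
    rw [e1, e1]

/-- The left-leaning single-peaked preference with peak `y`. -/
def Mt (y : Fin (m+1)) : SPPref m := by
  refine ⟨⟨mtFun y, mtFun y, mtFun_invol y, mtFun_invol y⟩, ?_⟩
  intro a b hab
  have h0 : mtFun y (0 : Fin (m+1)) = y := by
    have : ((0:Fin (m+1)):ℕ) ≤ (y:ℕ) := Nat.zero_le _
    rw [mtFun, if_pos this]
    ext; simp
  change mtFun y 0 ≤ a ∧ a < b ∨ b < a ∧ a ≤ mtFun y 0 at hab
  rw [h0] at hab
  show mtFun y a < mtFun y b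
  unfold mtFun
  rcases hab with ⟨h1, h2⟩ | ⟨h1, h2⟩
  · -- y ≤ a < b
    rw [Fin.le_def] at h1; rw [Fin.lt_def] at h2
    have hb : ¬ ((b:ℕ) ≤ (y:ℕ)) := by omega
    rw [if_neg hb]
    by_cases ha : (a:ℕ) ≤ (y:ℕ)
    · rw [if_pos ha]; simp only [Fin.lt_def, Fin.val_mk]; omega
    · rw [if_neg ha]; simp only [Fin.lt_def, Fin.val_mk]; omega
  · -- b < a ≤ y
    rw [Fin.le_def] at h2; rw [Fin.lt_def] at h1
    have ha : (a:ℕ) ≤ (y:ℕ) := h2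
    have hb : (b:ℕ) ≤ (y:ℕ) := by omega
    rw [if_pos ha, if_pos hb]
    simp only [Fin.lt_def, Fin.val_mk]
    omega

lemma Mt_symm_apply (y b : Fin (m+1)) : (Mt y).val.symm b = mtFun y b := rfl

lemma peak_Mt (y : Fin (m+1)) : peak (Mt y) = y := by
  show mtFun y 0 = y
  have : ((0:Fin (m+1)):ℕ) ≤ (y:ℕ) := Nat.zero_le _
  rw [mtFun, if_pos this]
  ext; simp

lemma UC_Mt (y : Fin (m+1)) : UC (Mt y) 0 = Finset.Iic y := by
  have h0 : mtFun y (0 : Fin (m+1)) = y := by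
    have : ((0:Fin (m+1)):ℕ) ≤ (y:ℕ) := Nat.zero_le _
    rw [mtFun, if_pos this]; ext; simp
  ext b
  simp only [UC, mem_filter, mem_univ, true_and, Mt_symm_apply, Finset.mem_Iic, h0]
  unfold mtFun
  constructor
  · intro h
    by_cases hb : (b:ℕ) ≤ (y:ℕ)
    · exact Fin.le_def.2 hb
    · rw [if_neg hb] at h; exact h
  · intro h
    have hb : (b:ℕ) ≤ (y:ℕ) := Fin.le_def.1 h
    rw [if_pos hb]
    simp only [Fin.le_def, Fin.val_mk]
    omega

/-- ranking function of the right-leaning preference with peak `x`: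
`x ≻ x+1 ≻ ⋯ ≻ m ≻ x-1 ≻ ⋯ ≻ 0`. -/
def mtFun' (x : Fin (m+1)) (k : Fin (m+1)) : Fin (m+1) :=
  if h : (k:ℕ) ≤ m - (x:ℕ) then ⟨(x:ℕ) + (k:ℕ), by have := x.isLt; omega⟩
  else ⟨m - (k:ℕ), by omega⟩

def mtInv' (x : Fin (m+1)) (b : Fin (m+1)) : Fin (m+1) :=
  if (x:ℕ) ≤ (b:ℕ) then ⟨(b:ℕ) - (x:ℕ), by have := b.isLt; omega⟩
  else ⟨m - (b:ℕ), by omega⟩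

lemma mtFun'_left (x : Fin (m+1)) : Function.LeftInverse (mtInv' x) (mtFun' x) := by
  intro k
  have hx := x.isLt; have hk := k.isLt
  by_cases h : (k:ℕ) ≤ m - (x:ℕ)
  · have e1 : mtFun' x k = ⟨(x:ℕ) + (k:ℕ), by omega⟩ := dif_pos h
    rw [e1]
    have e2 : mtInv' x ⟨(x:ℕ) + (k:ℕ), by omega⟩ = ⟨((x:ℕ) + (k:ℕ)) - (x:ℕ), by omega⟩ :=
      if_pos (by simp only [Fin.val_mk]; omega)
    rw [e2]; ext; simp only [Fin.val_mk]; omega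
  · have e1 : mtFun' x k = ⟨m - (k:ℕ), by omega⟩ := dif_neg h
    rw [e1]
    have e2 : mtInv' x ⟨m - (k:ℕ), by omega⟩ = ⟨m - (m - (k:ℕ)), by omega⟩ :=
      if_neg (by simp only [Fin.val_mk]; omega)
    rw [e2]; ext; simp only [Fin.val_mk]; omega

lemma mtFun'_right (x : Fin (m+1)) : Function.RightInverse (mtInv' x) (mtFun' x) := by
  intro b
  have hx := x.isLt; have hb := b.isLt
  by_cases h : (x:ℕ) ≤ (b:ℕ)
  · have e1 : mtInv' x b = ⟨(b:ℕ) - (x:ℕ), by omega⟩ := if_pos h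
    rw [e1]
    have e2 : mtFun' x ⟨(b:ℕ) - (x:ℕ), by omega⟩ = ⟨(x:ℕ) + ((b:ℕ) - (x:ℕ)), by omega⟩ :=
      dif_pos (by simp only [Fin.val_mk]; omega)
    rw [e2]; ext; simp only [Fin.val_mk]; omega
  · have e1 : mtInv' x b = ⟨m - (b:ℕ), by omega⟩ := if_neg h
    rw [e1]
    have e2 : mtFun' x ⟨m - (b:ℕ), by omega⟩ = ⟨m - (m - (b:ℕ)), by omega⟩ :=
      dif_neg (by simp only [Fin.val_mk]; omega)
    rw [e2]; ext; simp only [Fin.val_mk]; omega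

/-- The right-leaning single-peaked preference with peak `x`. -/
def Mt' (x : Fin (m+1)) : SPPref m := by
  refine ⟨⟨mtFun' x, mtInv' x, mtFun'_left x, mtFun'_right x⟩, ?_⟩
  intro a b hab
  have hx := x.isLt; have ha := a.isLt; have hb := b.isLt
  have h0 : mtFun' x (0 : Fin (m+1)) = x := by
    have : ((0:Fin (m+1)):ℕ) ≤ m - (x:ℕ) := Nat.zero_le _
    rw [mtFun', dif_pos this]
    ext; simp
  change mtFun' x 0 ≤ a ∧ a < b ∨ b < a ∧ a ≤ mtFun' x 0 at hab
  rw [h0] at hab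
  show mtInv' x a < mtInv' x b
  unfold mtInv'
  rcases hab with ⟨h1, h2⟩ | ⟨h1, h2⟩
  · -- x ≤ a < b
    rw [Fin.le_def] at h1; rw [Fin.lt_def] at h2
    have hbx : (x:ℕ) ≤ (b:ℕ) := by omega
    rw [if_pos h1, if_pos hbx]
    simp only [Fin.lt_def, Fin.val_mk]
    omega
  · -- b < a ≤ x
    rw [Fin.le_def] at h2; rw [Fin.lt_def] at h1
    have hbx : ¬ ((x:ℕ) ≤ (b:ℕ)) ∨ ((x:ℕ) ≤ (b:ℕ) ∧ (x:ℕ) ≤ (a:ℕ)) := by omega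
    by_cases hax : (x:ℕ) ≤ (a:ℕ)
    · -- then a = x, so a - x = 0 and b < x
      have hb' : ¬ ((x:ℕ) ≤ (b:ℕ)) := by omega
      rw [if_pos hax, if_neg hb']
      simp only [Fin.lt_def, Fin.val_mk]
      omega
    · have hb' : ¬ ((x:ℕ) ≤ (b:ℕ)) := by omega
      rw [if_neg hax, if_neg hb']
      simp only [Fin.lt_def, Fin.val_mk]
      omega

lemma Mt'_symm_apply (x b : Fin (m+1)) : (Mt' x).val.symm b = mtInv' x b := rfl

lemma peak_Mt' (x : Fin (m+1)) : peak (Mt' x) = x := by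
  show mtFun' x 0 = x
  have : ((0:Fin (m+1)):ℕ) ≤ m - (x:ℕ) := Nat.zero_le _
  rw [mtFun', dif_pos this]
  ext; simp

lemma UC_Mt' (x : Fin (m+1)) : UC (Mt' x) (Fin.last m) = Finset.Ici x := by
  have hx := x.isLt
  have h0 : mtInv' x (Fin.last m) = ⟨m - (x:ℕ), by omega⟩ := by
    have : (x:ℕ) ≤ ((Fin.last m : Fin (m+1)):ℕ) := by
      simp only [Fin.val_last]; omega
    rw [mtInv', if_pos this]
    ext; simp only [Fin.val_last]
  ext b
  have hb := b.isLt
  simp only [UC, mem_filter, mem_univ, true_and, Mt'_symm_apply, Finset.mem_Ici, h0]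
  unfold mtInv'
  constructor
  · intro h
    by_cases hxb : (x:ℕ) ≤ (b:ℕ)
    · exact Fin.le_def.2 hxb
    · rw [if_neg hxb] at h
      simp only [Fin.le_def, Fin.val_mk] at h
      omega
  · intro h
    have hxb : (x:ℕ) ≤ (b:ℕ) := Fin.le_def.1 h
    rw [if_pos hxb]
    simp only [Fin.le_def, Fin.val_mk]
    omega

end Extreme
section Prob
variable {m n : ℕ} {φ : RSCF m n}

lemma probOn_nonneg (hφ : IsRSCF φ) (P : Profile m n) (B : Finset (Fin (m+1))) :
    0 ≤ probOn φ P B :=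
  Finset.sum_nonneg fun b _ => (hφ P).1 b

lemma probOn_mono (hφ : IsRSCF φ) (P : Profile m n) {B C : Finset (Fin (m+1))}
    (h : B ⊆ C) : probOn φ P B ≤ probOn φ P C :=
  Finset.sum_le_sum_of_subset_of_nonneg h fun b _ _ => (hφ P).1 b

lemma probOn_univ (hφ : IsRSCF φ) (P : Profile m n) : probOn φ P univ = 1 := (hφ P).2

lemma probOn_le_one (hφ : IsRSCF φ) (P : Profile m n) (B : Finset (Fin (m+1))) :
    probOn φ P B ≤ 1 := by
  rw [← probOn_univ hφ P]
  exact probOn_mono hφ P (Finset.subset_univ B)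

lemma probOn_union (P : Profile m n) {B C : Finset (Fin (m+1))} (h : Disjoint B C) :
    probOn φ P (B ∪ C) = probOn φ P B + probOn φ P C :=
  Finset.sum_union h

lemma probOn_one_mono (hφ : IsRSCF φ) {P : Profile m n} {B C : Finset (Fin (m+1))}
    (hB : probOn φ P B = 1) (hBC : B ⊆ C) : probOn φ P C = 1 :=
  le_antisymm (probOn_le_one hφ P C) (hB ▸ probOn_mono hφ P hBC)

lemma probOn_disjoint_zero (hφ : IsRSCF φ) {P : Profile m n} {B C : Finset (Fin (m+1))}
    (hB : probOn φ P B = 1) (h : Disjoint B C) : probOn φ P C = 0 := by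
  have h1 : probOn φ P (B ∪ C) ≤ 1 := probOn_le_one hφ P _
  rw [probOn_union P h, hB] at h1
  exact le_antisymm (by linarith) (probOn_nonneg hφ P C)

end Prob

section Intervals
variable {m : ℕ}

lemma Iio_union_Icc_fin {l y : Fin (m+1)} (h : l ≤ y) :
    Finset.Iio l ∪ Finset.Icc l y = Finset.Iic y := by
  ext a
  simp only [Finset.mem_union, Finset.mem_Iio, Finset.mem_Icc, Finset.mem_Iic,
    Fin.lt_def, Fin.le_def] at *
  omega

lemma Iio_disj_Icc_fin (l y : Fin (m+1)) :
    Disjoint (Finset.Iio l) (Finset.Icc l y) := by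
  rw [Finset.disjoint_left]
  intro a ha hb
  simp only [Finset.mem_Iio, Finset.mem_Icc] at *
  exact absurd (lt_of_lt_of_le ha hb.1) (lt_irrefl _)

lemma Icc_union_Ioi_fin {x r : Fin (m+1)} (h : x ≤ r) :
    Finset.Icc x r ∪ Finset.Ioi r = Finset.Ici x := by
  ext a
  simp only [Finset.mem_union, Finset.mem_Ioi, Finset.mem_Icc, Finset.mem_Ici,
    Fin.lt_def, Fin.le_def] at *
  omega

lemma Icc_disj_Ioi_fin (x r : Fin (m+1)) :
    Disjoint (Finset.Icc x r) (Finset.Ioi r) := by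
  rw [Finset.disjoint_left]
  intro a ha hb
  simp only [Finset.mem_Ioi, Finset.mem_Icc] at *
  exact absurd (lt_of_le_of_lt ha.2 hb) (lt_irrefl _)

lemma Iic_union_Ioi_fin (t : Fin (m+1)) :
    Finset.Iic t ∪ Finset.Ioi t = Finset.univ := by
  ext a
  simp only [Finset.mem_union, Finset.mem_Iic, Finset.mem_Ioi, Finset.mem_univ,
    Fin.lt_def, Fin.le_def, iff_true]
  omega

lemma Iic_disj_Ioi_fin (t : Fin (m+1)) :
    Disjoint (Finset.Iic t) (Finset.Ioi t) := by
  rw [Finset.disjoint_left]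
  intro a ha hb
  simp only [Finset.mem_Iic, Finset.mem_Ioi] at *
  exact absurd (lt_of_le_of_lt ha hb) (lt_irrefl _)

lemma Iic_disj_Iio (t l : Fin (m+1)) :
    Disjoint (Finset.Icc l t) (Finset.Iio l) := (Iio_disj_Icc_fin l t).symm

end Intervals
section Support
variable {m n : ℕ} {φ : RSCF m n}

lemma UC_peak (P : SPPref m) : UC P (peak P) = {peak P} := by
  ext b
  simp only [UC, mem_filter, mem_univ, true_and, Finset.mem_singleton, peak]
  simp only [Equiv.symm_apply_apply]; rw [Finset.mem_filter]; simp only [mem_univ, true_and]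
  constructor
  · intro h
    have hb : P.val.symm b = 0 := le_antisymm h (Fin.zero_le _)
    have := congrArg P.val hb
    rwa [Equiv.apply_symm_apply] at this
  · rintro rfl
    rw [Equiv.symm_apply_apply]

lemma UC_peak_max' (Q : SPPref m) {x : Fin (m+1)} (hx : peak Q = x) :
    (UC Q x).max' (UC_nonempty _ _) = x := by
  have h1 : UC Q x = {x} := by rw [← hx]; exact UC_peak Q
  apply le_antisymm
  · apply Finset.max'_le
    intro b hb
    rw [h1] at hb
    simp at hb
    exact le_of_eq hb
  · exact Finset.le_max' _ _ (by rw [h1]; simp)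

lemma UC_peak_min' (Q : SPPref m) {y : Fin (m+1)} (hy : peak Q = y) :
    (UC Q y).min' (UC_nonempty _ _) = y := by
  have h1 : UC Q y = {y} := by rw [← hy]; exact UC_peak Q
  apply le_antisymm
  · exact Finset.min'_le _ _ (by rw [h1]; simp)
  · apply Finset.le_min'
    intro b hb
    rw [h1] at hb
    simp at hb
    exact le_of_eq hb.symm

/-- If all peaks are `≥ x`, all mass is on `[x, m]`. -/
lemma mass_Ici (hφ : IsRSCF φ) (hun : Unanimous φ) (hsp : StrategyProof φ)
    (hne : (univ : Finset (Fin n)).Nonempty) (x : Fin (m+1)) :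
    ∀ (k : ℕ) (P : Profile m n), (∀ i, x ≤ peak (P i)) →
      (univ.filter fun i => P i ≠ Mt' x).card ≤ k →
      probOn φ P (Finset.Icc x (univ.sup' hne fun i => (UC (P i) x).max' (UC_nonempty _ _))) = 1 := by
  intro k
  induction k with
  | zero =>
    intro P hall hcard
    have hb : ∀ i, P i = Mt' x := by
      intro i
      by_contra hc
      have : i ∈ univ.filter fun i => P i ≠ Mt' x := by simp [hc]
      have := Finset.card_pos.2 ⟨i, this⟩
      omega
    have hx1 : φ P x = 1 := hun P x fun i => by rw [hb i, peak_Mt']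
    have hxR : x ∈ Finset.Icc x (univ.sup' hne fun i => (UC (P i) x).max' (UC_nonempty _ _)) := by
      rcases hne with ⟨i0, _⟩
      refine Finset.mem_Icc.2 ⟨le_refl _, le_trans ?_ (Finset.le_sup' _ (Finset.mem_univ i0))⟩
      exact le_trans (hall i0) (peak_le_UC_max' _ _)
    refine le_antisymm (probOn_le_one hφ P _) ?_
    rw [← hx1]
    exact Finset.single_le_sum (fun b _ => (hφ P).1 b) hxR
  | succ k ih =>
    intro P hall hcard
    by_cases hempty : (univ.filter fun i => P i ≠ Mt' x) = ∅
    · -- all agents at Mt' x : apply the base case argument via ih with k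
      exact ih P hall (by rw [hempty]; simp)
    · -- pick j in bad set with maximal r
      obtain ⟨j, hj, hjmax⟩ := Finset.exists_max_image _
        (fun i => (UC (P i) x).max' (UC_nonempty _ _)) (Finset.nonempty_of_ne_empty hempty)
      set P' : Profile m n := Function.update P j (Mt' x) with hP'
      have hall' : ∀ i, x ≤ peak (P' i) := by
        intro i
        by_cases hij : i = j
        · subst hij; rw [hP', Function.update_self, peak_Mt']
        · rw [hP', Function.update_of_ne hij]; exact hall i
      have hbad' : (univ.filter fun i => P' i ≠ Mt' x) ⊆
          (univ.filter fun i => P i ≠ Mt' x).erase j := by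
        intro i hi
        simp only [mem_filter, mem_univ, true_and] at hi
        by_cases hij : i = j
        · subst hij; rw [hP', Function.update_self] at hi; exact absurd rfl hi
        · rw [hP', Function.update_of_ne hij] at hi
          exact Finset.mem_erase.2 ⟨hij, by simp [hi]⟩
      have hcard' : (univ.filter fun i => P' i ≠ Mt' x).card ≤ k := by
        have h1 := Finset.card_le_card hbad'
        have h2 : ((univ.filter fun i => P i ≠ Mt' x).erase j).card
            = (univ.filter fun i => P i ≠ Mt' x).card - 1 :=
          Finset.card_erase_of_mem hj
        omega
      have ihP' := ih P' hall' hcard'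
      -- the UC set of the true preference of j
      have hUCj : UC (P j) x = Finset.Icc x ((UC (P j) x).max' (UC_nonempty _ _)) := by
        conv_lhs => rw [UC_eq_Icc (P j) x]
        rw [UC_min'_eq (P j) (hall j)]
      -- sup for P' is ≤ r j
      have hsup' : (univ.sup' hne fun i => (UC (P' i) x).max' (UC_nonempty _ _))
          ≤ (UC (P j) x).max' (UC_nonempty _ _) := by
        refine Finset.sup'_le _ _ fun i _ => ?_
        by_cases hij : i = j
        · rw [hij, hP', Function.update_self, UC_peak_max' (Mt' x) (peak_Mt' x)]
          exact le_trans (hall j) (peak_le_UC_max' _ _)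
        · rw [hP', Function.update_of_ne hij]
          by_cases hbi : P i = Mt' x
          · rw [hbi]
            rw [UC_peak_max' (Mt' x) (peak_Mt' x)]
            exact le_trans (hall j) (peak_le_UC_max' _ _)
          · exact hjmax i (by simp [hbi])
      -- SP step
      have hSP := hsp j P (Mt' x) x
      rw [← hP'] at hSP
      have h1 : probOn φ P' (UC (P j) x) = 1 := by
        refine le_antisymm (probOn_le_one hφ P' _) ?_
        rw [← ihP']
        apply probOn_mono hφ P'
        rw [hUCj]
        intro b hb
        rw [Finset.mem_Icc] at *
        exact ⟨hb.1, le_trans hb.2 hsup'⟩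
      have h2 : probOn φ P (UC (P j) x) = 1 := le_antisymm (probOn_le_one hφ P _) (h1 ▸ hSP)
      refine probOn_one_mono hφ h2 ?_
      rw [hUCj]
      intro b hb
      rw [Finset.mem_Icc] at *
      exact ⟨hb.1, le_trans hb.2 (Finset.le_sup' (fun i => (UC (P i) x).max' (UC_nonempty _ _)) (Finset.mem_univ j))⟩

end Support
section Support2
variable {m n : ℕ} {φ : RSCF m n}

/-- If all peaks are `≤ y`, all mass is on `[0, y]`. -/
lemma mass_Iic_aux (hφ : IsRSCF φ) (hun : Unanimous φ) (hsp : StrategyProof φ)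
    (hne : (univ : Finset (Fin n)).Nonempty) (y : Fin (m+1)) :
    ∀ (k : ℕ) (P : Profile m n), (∀ i, peak (P i) ≤ y) →
      (univ.filter fun i => P i ≠ Mt y).card ≤ k →
      probOn φ P (Finset.Icc (univ.inf' hne fun i => (UC (P i) y).min' (UC_nonempty _ _)) y) = 1 := by
  intro k
  induction k with
  | zero =>
    intro P hall hcard
    have hb : ∀ i, P i = Mt y := by
      intro i
      by_contra hc
      have : i ∈ univ.filter fun i => P i ≠ Mt y := by simp [hc]
      have := Finset.card_pos.2 ⟨i, this⟩
      omega
    have hy1 : φ P y = 1 := hun P y fun i => by rw [hb i, peak_Mt]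
    have hyR : y ∈ Finset.Icc (univ.inf' hne fun i => (UC (P i) y).min' (UC_nonempty _ _)) y := by
      rcases hne with ⟨i0, _⟩
      refine Finset.mem_Icc.2 ⟨le_trans (Finset.inf'_le _ (Finset.mem_univ i0)) ?_, le_refl _⟩
      exact le_trans (UC_min'_le_peak _ _) (hall i0)
    refine le_antisymm (probOn_le_one hφ P _) ?_
    rw [← hy1]
    exact Finset.single_le_sum (fun b _ => (hφ P).1 b) hyR
  | succ k ih =>
    intro P hall hcard
    by_cases hempty : (univ.filter fun i => P i ≠ Mt y) = ∅
    · exact ih P hall (by rw [hempty]; simp)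
    · obtain ⟨j, hj, hjmin⟩ := Finset.exists_min_image _
        (fun i => (UC (P i) y).min' (UC_nonempty _ _)) (Finset.nonempty_of_ne_empty hempty)
      set P' : Profile m n := Function.update P j (Mt y) with hP'
      have hall' : ∀ i, peak (P' i) ≤ y := by
        intro i
        by_cases hij : i = j
        · subst hij; rw [hP', Function.update_self, peak_Mt]
        · rw [hP', Function.update_of_ne hij]; exact hall i
      have hbad' : (univ.filter fun i => P' i ≠ Mt y) ⊆
          (univ.filter fun i => P i ≠ Mt y).erase j := by
        intro i hi
        simp only [mem_filter, mem_univ, true_and] at hi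
        by_cases hij : i = j
        · subst hij; rw [hP', Function.update_self] at hi; exact absurd rfl hi
        · rw [hP', Function.update_of_ne hij] at hi
          exact Finset.mem_erase.2 ⟨hij, by simp [hi]⟩
      have hcard' : (univ.filter fun i => P' i ≠ Mt y).card ≤ k := by
        have h1 := Finset.card_le_card hbad'
        have h2 : ((univ.filter fun i => P i ≠ Mt y).erase j).card
            = (univ.filter fun i => P i ≠ Mt y).card - 1 :=
          Finset.card_erase_of_mem hj
        omega
      have ihP' := ih P' hall' hcard'
      have hUCj : UC (P j) y = Finset.Icc ((UC (P j) y).min' (UC_nonempty _ _)) y := by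
        conv_lhs => rw [UC_eq_Icc (P j) y]
        rw [UC_max'_eq (P j) (hall j)]
      have hinf' : (UC (P j) y).min' (UC_nonempty _ _)
          ≤ (univ.inf' hne fun i => (UC (P' i) y).min' (UC_nonempty _ _)) := by
        refine Finset.le_inf' _ _ fun i _ => ?_
        by_cases hij : i = j
        · rw [hij, hP', Function.update_self, UC_peak_min' (Mt y) (peak_Mt y)]
          exact le_trans (UC_min'_le_peak _ _) (hall j)
        · rw [hP', Function.update_of_ne hij]
          by_cases hbi : P i = Mt y
          · rw [hbi, UC_peak_min' (Mt y) (peak_Mt y)]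
            exact le_trans (UC_min'_le_peak _ _) (hall j)
          · exact hjmin i (by simp [hbi])
      have hSP := hsp j P (Mt y) y
      rw [← hP'] at hSP
      have h1 : probOn φ P' (UC (P j) y) = 1 := by
        refine le_antisymm (probOn_le_one hφ P' _) ?_
        rw [← ihP']
        apply probOn_mono hφ P'
        rw [hUCj]
        intro b hb
        rw [Finset.mem_Icc] at *
        exact ⟨le_trans hinf' hb.1, hb.2⟩
      have h2 : probOn φ P (UC (P j) y) = 1 := le_antisymm (probOn_le_one hφ P _) (h1 ▸ hSP)
      refine probOn_one_mono hφ h2 ?_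
      rw [hUCj]
      intro b hb
      rw [Finset.mem_Icc] at *
      exact ⟨le_trans (Finset.inf'_le (fun i => (UC (P i) y).min' (UC_nonempty _ _))
        (Finset.mem_univ j)) hb.1, hb.2⟩

/-- Corollary: all peaks `≤ y` implies no mass above `y`. -/
lemma mass_Ioi_zero (hφ : IsRSCF φ) (hun : Unanimous φ) (hsp : StrategyProof φ)
    (hne : (univ : Finset (Fin n)).Nonempty) {y : Fin (m+1)} {P : Profile m n}
    (hall : ∀ i, peak (P i) ≤ y) : probOn φ P (Finset.Ioi y) = 0 := by
  have h1 := mass_Iic_aux hφ hun hsp hne y _ P hall (le_refl _)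
  have h2 : probOn φ P (Finset.Iic y) = 1 := by
    refine probOn_one_mono hφ h1 ?_
    intro b hb
    rw [Finset.mem_Icc] at hb
    exact Finset.mem_Iic.2 hb.2
  exact probOn_disjoint_zero hφ h2 (Iic_disj_Ioi_fin y)

/-- Corollary: all peaks `≥ x` implies no mass below `x`. -/
lemma mass_Iio_zero (hφ : IsRSCF φ) (hun : Unanimous φ) (hsp : StrategyProof φ)
    (hne : (univ : Finset (Fin n)).Nonempty) {x : Fin (m+1)} {P : Profile m n}
    (hall : ∀ i, x ≤ peak (P i)) : probOn φ P (Finset.Iio x) = 0 := by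
  have h1 := mass_Ici hφ hun hsp hne x _ P hall (le_refl _)
  have h2 : probOn φ P (Finset.Ici x) = 1 := by
    refine probOn_one_mono hφ h1 ?_
    intro b hb
    rw [Finset.mem_Icc] at hb
    exact Finset.mem_Ici.2 hb.1
  have hd : Disjoint (Finset.Ici x) (Finset.Iio x) := by
    rw [Finset.disjoint_left]
    intro a ha hb
    simp only [Finset.mem_Ici, Finset.mem_Iio] at *
    exact absurd (lt_of_le_of_lt ha hb) (lt_irrefl _)
  exact probOn_disjoint_zero hφ h2 hd

end Support2
section Phases
variable {m n : ℕ} {φ : RSCF m n}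

/-- Phase (a): replacing every agent with peak `≤ t` by `Mt t` preserves `F_t`. -/
lemma phaseA (hφ : IsRSCF φ) (hun : Unanimous φ) (hsp : StrategyProof φ)
    (hne : (univ : Finset (Fin n)).Nonempty) (t : Fin (m+1)) :
    ∀ (k : ℕ) (P : Profile m n),
      (univ.filter fun i => peak (P i) ≤ t ∧ P i ≠ Mt t).card ≤ k →
      probOn φ P (Finset.Iic t)
        = probOn φ (fun i => if peak (P i) ≤ t then Mt t else P i) (Finset.Iic t) := by
  intro k
  induction k with
  | zero =>
    intro P hcard
    have heq : (fun i => if peak (P i) ≤ t then Mt t else P i) = P := by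
      funext i
      by_cases h : peak (P i) ≤ t
      · rw [if_pos h]
        by_contra hc
        have : i ∈ univ.filter fun i => peak (P i) ≤ t ∧ P i ≠ Mt t := by
          simp only [mem_filter, mem_univ, true_and]
          exact ⟨h, fun he => hc (by rw [he])⟩
        have := Finset.card_pos.2 ⟨i, this⟩
        omega
      · rw [if_neg h]
    rw [heq]
  | succ k ih =>
    intro P hcard
    by_cases hempty : (univ.filter fun i => peak (P i) ≤ t ∧ P i ≠ Mt t) = ∅
    · exact ih P (by rw [hempty]; simp)
    · obtain ⟨j, hj, hjmin⟩ := Finset.exists_min_image _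
        (fun i => peak (P i)) (Finset.nonempty_of_ne_empty hempty)
      have hjmem := hj
      simp only [mem_filter, mem_univ, true_and] at hj
      set P' : Profile m n := Function.update P j (Mt t) with hP'
      -- the update preserves the endpoint
      have hend : (fun i => if peak (P' i) ≤ t then Mt t else P' i)
          = (fun i => if peak (P i) ≤ t then Mt t else P i) := by
        funext i
        by_cases hij : i = j
        · subst hij
          rw [hP', Function.update_self, if_pos hj.1, if_pos (by rw [peak_Mt])]
        · rw [hP', Function.update_of_ne hij]
      -- the bad set shrinks
      have hcard' : (univ.filter fun i => peak (P' i) ≤ t ∧ P' i ≠ Mt t).card ≤ k := by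
        have hsub : (univ.filter fun i => peak (P' i) ≤ t ∧ P' i ≠ Mt t) ⊆
            (univ.filter fun i => peak (P i) ≤ t ∧ P i ≠ Mt t).erase j := by
          intro i hi
          simp only [mem_filter, mem_univ, true_and] at hi
          by_cases hij : i = j
          · subst hij; rw [hP', Function.update_self] at hi; exact absurd rfl hi.2
          · rw [hP', Function.update_of_ne hij] at hi
            refine Finset.mem_erase.2 ⟨hij, ?_⟩
            simp only [mem_filter, mem_univ, true_and]
            exact hi
        have h1 := Finset.card_le_card hsub
        have h2 := Finset.card_erase_of_mem hjmem
        omega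
      have hstep : probOn φ P (Finset.Iic t) = probOn φ P' (Finset.Iic t) := by
        apply le_antisymm
        · -- SP with truth Mt t at P'
          have h := hsp j P' (P j) 0
          rw [hP'] at h
          rw [Function.update_idem, Function.update_eq_self] at h
          have hUC : UC (Function.update P j (Mt t) j) 0 = Finset.Iic t := by
            rw [Function.update_self]; exact UC_Mt t
          rw [hUC] at h
          exact h
        · -- SP with truth P j at P
          have h := hsp j P (Mt t) t
          rw [← hP'] at h
          set l := (UC (P j) t).min' (UC_nonempty _ _) with hl
          have hUC : UC (P j) t = Finset.Icc l t := by
            conv_lhs => rw [UC_eq_Icc (P j) t]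
            rw [UC_max'_eq (P j) hj.1]
          have hlp : l ≤ peak (P j) := UC_min'_le_peak _ _
          -- no mass below l at P'
          have hzero : probOn φ P' (Finset.Iio l) = 0 := by
            apply mass_Iio_zero hφ hun hsp hne
            intro i
            by_cases hij : i = j
            · subst hij
              rw [hP', Function.update_self, peak_Mt]
              exact le_trans hlp hj.1
            · rw [hP', Function.update_of_ne hij]
              by_cases hle : peak (P i) ≤ t
              · by_cases hMt : P i = Mt t
                · rw [hMt, peak_Mt]; exact le_trans hlp hj.1
                · exact le_trans hlp (hjmin i (by
                    simp only [mem_filter, mem_univ, true_and]; exact ⟨hle, hMt⟩))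
              · push_neg at hle
                exact le_of_lt (lt_of_le_of_lt (le_trans hlp hj.1) hle)
          have hsplit : probOn φ P' (Finset.Iic t)
              = probOn φ P' (Finset.Iio l) + probOn φ P' (Finset.Icc l t) := by
            rw [← probOn_union P' (Iio_disj_Icc_fin l t),
              Iio_union_Icc_fin (le_trans hlp hj.1)]
          calc probOn φ P' (Finset.Iic t)
              = probOn φ P' (Finset.Icc l t) := by rw [hsplit, hzero]; ring
            _ ≤ probOn φ P (Finset.Icc l t) := by rw [← hUC]; exact h
            _ ≤ probOn φ P (Finset.Iic t) := probOn_mono hφ P (by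
                intro b hb
                rw [Finset.mem_Icc] at hb
                exact Finset.mem_Iic.2 hb.2)
      rw [hstep, ← hend]
      exact ih P' hcard'

end Phases
section PhasesB
variable {m n : ℕ} {φ : RSCF m n}

lemma compl_Iic (hφ : IsRSCF φ) (P : Profile m n) (t : Fin (m+1)) :
    probOn φ P (Finset.Iic t) + probOn φ P (Finset.Ioi t) = 1 := by
  rw [← probOn_union P (Iic_disj_Ioi_fin t), Iic_union_Ioi_fin t]
  exact probOn_univ hφ P

/-- Phase (b): replacing every agent with peak `> t` by `Mt' (t+1)` preserves `F_t`. -/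
lemma phaseB (hφ : IsRSCF φ) (hun : Unanimous φ) (hsp : StrategyProof φ)
    (hne : (univ : Finset (Fin n)).Nonempty) (t : Fin (m+1)) (ht : (t:ℕ) < m) :
    ∀ (k : ℕ) (P : Profile m n),
      (univ.filter fun i => t < peak (P i) ∧ P i ≠ Mt' ⟨(t:ℕ)+1, by omega⟩).card ≤ k →
      probOn φ P (Finset.Iic t)
        = probOn φ (fun i => if t < peak (P i) then Mt' ⟨(t:ℕ)+1, by omega⟩ else P i)
            (Finset.Iic t) := by
  set s : Fin (m+1) := ⟨(t:ℕ)+1, by omega⟩ with hs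
  have hts : t < s := by rw [hs, Fin.lt_def]; simp
  have hIoi : Finset.Ioi t = Finset.Ici s := by
    ext b
    simp only [Finset.mem_Ioi, Finset.mem_Ici, Fin.lt_def, Fin.le_def, hs]
    omega
  intro k
  induction k with
  | zero =>
    intro P hcard
    have heq : (fun i => if t < peak (P i) then Mt' s else P i) = P := by
      funext i
      by_cases h : t < peak (P i)
      · rw [if_pos h]
        by_contra hc
        have : i ∈ univ.filter fun i => t < peak (P i) ∧ P i ≠ Mt' s := by
          simp only [mem_filter, mem_univ, true_and]
          exact ⟨h, fun he => hc (by rw [he])⟩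
        have := Finset.card_pos.2 ⟨i, this⟩
        omega
      · rw [if_neg h]
    rw [heq]
  | succ k ih =>
    intro P hcard
    by_cases hempty : (univ.filter fun i => t < peak (P i) ∧ P i ≠ Mt' s) = ∅
    · exact ih P (by rw [hempty]; simp)
    · obtain ⟨j, hjmem, hjmax⟩ := Finset.exists_max_image _
        (fun i => peak (P i)) (Finset.nonempty_of_ne_empty hempty)
      have hj := hjmem
      simp only [mem_filter, mem_univ, true_and] at hj
      have hsj : s ≤ peak (P j) := by
        rw [Fin.le_def, hs]
        have := Fin.lt_def.1 hj.1
        simpa using this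
      set P' : Profile m n := Function.update P j (Mt' s) with hP'
      have hend : (fun i => if t < peak (P' i) then Mt' s else P' i)
          = (fun i => if t < peak (P i) then Mt' s else P i) := by
        funext i
        by_cases hij : i = j
        · subst hij
          rw [hP', Function.update_self, if_pos hj.1, if_pos (by rw [peak_Mt']; exact hts)]
        · rw [hP', Function.update_of_ne hij]
      have hcard' : (univ.filter fun i => t < peak (P' i) ∧ P' i ≠ Mt' s).card ≤ k := by
        have hsub : (univ.filter fun i => t < peak (P' i) ∧ P' i ≠ Mt' s) ⊆
            (univ.filter fun i => t < peak (P i) ∧ P i ≠ Mt' s).erase j := by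
          intro i hi
          simp only [mem_filter, mem_univ, true_and] at hi
          by_cases hij : i = j
          · subst hij; rw [hP', Function.update_self] at hi; exact absurd rfl hi.2
          · rw [hP', Function.update_of_ne hij] at hi
            refine Finset.mem_erase.2 ⟨hij, ?_⟩
            simp only [mem_filter, mem_univ, true_and]
            exact hi
        have h1 := Finset.card_le_card hsub
        have h2 := Finset.card_erase_of_mem hjmem
        omega
      have hstep : probOn φ P (Finset.Ioi t) = probOn φ P' (Finset.Ioi t) := by
        apply le_antisymm
        · -- SP with truth Mt' s at P'
          have h := hsp j P' (P j) (Fin.last m)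
          rw [hP'] at h
          rw [Function.update_idem, Function.update_eq_self] at h
          have hUC : UC (Function.update P j (Mt' s) j) (Fin.last m) = Finset.Ioi t := by
            rw [Function.update_self, UC_Mt' s, hIoi]
          rw [hUC] at h
          exact h
        · -- SP with truth P j at P
          have h := hsp j P (Mt' s) s
          rw [← hP'] at h
          set r := (UC (P j) s).max' (UC_nonempty _ _) with hr
          have hUC : UC (P j) s = Finset.Icc s r := by
            conv_lhs => rw [UC_eq_Icc (P j) s]
            rw [UC_min'_eq (P j) hsj]
          have hrp : peak (P j) ≤ r := peak_le_UC_max' _ _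
          have hzero : probOn φ P' (Finset.Ioi r) = 0 := by
            apply mass_Ioi_zero hφ hun hsp hne
            intro i
            by_cases hij : i = j
            · subst hij
              rw [hP', Function.update_self, peak_Mt']
              exact le_trans hsj hrp
            · rw [hP', Function.update_of_ne hij]
              by_cases hgt : t < peak (P i)
              · by_cases hMt : P i = Mt' s
                · rw [hMt, peak_Mt']; exact le_trans hsj hrp
                · exact le_trans (hjmax i (by
                    simp only [mem_filter, mem_univ, true_and]; exact ⟨hgt, hMt⟩)) hrp
              · push_neg at hgt
                exact le_trans hgt (le_trans (le_of_lt hj.1) hrp)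
          have hsplit : probOn φ P' (Finset.Ioi t)
              = probOn φ P' (Finset.Icc s r) + probOn φ P' (Finset.Ioi r) := by
            rw [← probOn_union P' (Icc_disj_Ioi_fin s r),
              Icc_union_Ioi_fin (le_trans hsj hrp), hIoi]
          calc probOn φ P' (Finset.Ioi t)
              = probOn φ P' (Finset.Icc s r) := by rw [hsplit, hzero]; ring
            _ ≤ probOn φ P (Finset.Icc s r) := by rw [← hUC]; exact h
            _ ≤ probOn φ P (Finset.Ioi t) := probOn_mono hφ P (by
                rw [hIoi]
                intro b hb
                rw [Finset.mem_Icc] at hb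
                exact Finset.mem_Ici.2 hb.1)
      have hstepF : probOn φ P (Finset.Iic t) = probOn φ P' (Finset.Iic t) := by
        have h1 := compl_Iic hφ P t
        have h2 := compl_Iic hφ P' t
        rw [hstep] at h1
        linarith
      rw [hstepF, ← hend]
      exact ih P' hcard'

end PhasesB
section ESsec
variable {m n g : ℕ} {φ : RSCF m n}

/-- The extreme profile attached to a coalition `S`. -/
def esProf (m : ℕ) {n : ℕ} (S : Finset (Fin n)) : Profile m n :=
  fun i => if i ∈ S then Mt 0 else Mt' (Fin.last m)

lemma UC_Mt0 (a : Fin (m+1)) : UC (Mt (0 : Fin (m+1))) a = Finset.Iic a := by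
  have hid : ∀ b : Fin (m+1), mtFun 0 b = b := by
    intro b
    unfold mtFun
    by_cases h : (b:ℕ) ≤ ((0:Fin (m+1)):ℕ)
    · have hb0 : (b:ℕ) = 0 := by simpa using h
      rw [if_pos h]
      ext; simp [hb0]
    · rw [if_neg h]
  ext b
  simp only [UC, mem_filter, mem_univ, true_and, Finset.mem_Iic, Mt_symm_apply, hid]

lemma peak_esProf (S : Finset (Fin n)) (i : Fin n) :
    peak (esProf m S i) = if i ∈ S then 0 else Fin.last m := by
  by_cases h : i ∈ S <;> simp [esProf, h, peak_Mt, peak_Mt']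

/-- Group-wise anonymity: `φ (esProf S)` depends only on group counts of `S`. -/
lemma es_count_eq (grp : Fin n → Fin g) (hga : GroupAnon grp φ) {S S' : Finset (Fin n)}
    (h : ∀ q, (univ.filter fun i => grp i = q ∧ i ∈ S).card
            = (univ.filter fun i => grp i = q ∧ i ∈ S').card) :
    φ (esProf m S) = φ (esProf m S') := by
  classical
  set f : Fin n → Fin g × Bool := fun i => (grp i, decide (i ∈ S)) with hf
  set f' : Fin n → Fin g × Bool := fun i => (grp i, decide (i ∈ S')) with hf'
  have hfilter : ∀ (T : Finset (Fin n)) (k : Fin g × Bool),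
      (univ.filter fun a => (grp a, decide (a ∈ T)) = k)
        = if k.2 then univ.filter (fun a => grp a = k.1 ∧ a ∈ T)
          else univ.filter (fun a => grp a = k.1 ∧ a ∉ T) := by
    intro T k
    rcases k with ⟨q, b⟩
    cases b with
    | false => ext a; simp [Prod.ext_iff]
    | true => ext a; simp [Prod.ext_iff]
  have hnotcard : ∀ (T : Finset (Fin n)) (q : Fin g),
      (univ.filter fun a => grp a = q ∧ a ∉ T).card
        = (univ.filter fun a => grp a = q).card
          - (univ.filter fun a => grp a = q ∧ a ∈ T).card := by
    intro T q
    have e1 : (univ.filter fun a => grp a = q ∧ a ∈ T)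
        = (univ.filter fun a => grp a = q).filter (fun a => a ∈ T) := by
      rw [Finset.filter_filter]
    have e2 : (univ.filter fun a => grp a = q ∧ a ∉ T)
        = (univ.filter fun a => grp a = q).filter (fun a => a ∉ T) := by
      rw [Finset.filter_filter]
    have := Finset.card_filter_add_card_filter_not
      (s := univ.filter fun a => grp a = q) (p := fun a => a ∈ T)
    rw [e1, e2]
    omega
  have hcard : ∀ k, Fintype.card {a // f' a = k} = Fintype.card {a // f a = k} := by
    intro k
    rw [Fintype.card_subtype, Fintype.card_subtype, hf, hf']
    simp only []
    rw [hfilter S k, hfilter S' k]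
    rcases k with ⟨q, b⟩
    cases b
    · simp only [if_false, Bool.false_eq_true]
      rw [hnotcard S q, hnotcard S' q, h q]
    · simp only [if_true]
      exact (h q).symm
  let e : ∀ k, {a // f' a = k} ≃ {a // f a = k} := fun k => Fintype.equivOfCardEq (hcard k)
  let π : Equiv.Perm (Fin n) :=
    (Equiv.sigmaFiberEquiv f').symm.trans
      ((Equiv.sigmaCongrRight e).trans (Equiv.sigmaFiberEquiv f))
  have hπ : ∀ i, f (π i) = f' i := by
    intro i
    have : π i = ((e (f' i)) ⟨i, rfl⟩).val := rfl
    rw [this]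
    exact ((e (f' i)) ⟨i, rfl⟩).2
  have hgrp : ∀ i, grp (π i) = grp i := fun i => congrArg Prod.fst (hπ i)
  have hmem : ∀ i, (π i ∈ S ↔ i ∈ S') := by
    intro i
    have := congrArg Prod.snd (hπ i)
    simp only [hf, hf'] at this
    exact decide_eq_decide.1 this
  have hprof : (fun i => esProf m S (π i)) = esProf m S' := by
    funext i
    by_cases hi : i ∈ S'
    · simp [esProf, (hmem i).2 hi, hi]
    · have hnotin : π i ∉ S := fun hc => hi ((hmem i).1 hc)
      simp [esProf, hnotin, hi]
  rw [hga π hgrp (esProf m S), hprof]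

/-- Monotonicity along inclusions of coalitions. -/
lemma es_mono (hφ : IsRSCF φ) (hsp : StrategyProof φ) (t : Fin (m+1)) :
    ∀ (k : ℕ) (S' S : Finset (Fin n)), S' ⊆ S → (S \ S').card ≤ k →
      probOn φ (esProf m S') (Finset.Iic t) ≤ probOn φ (esProf m S) (Finset.Iic t) := by
  intro k
  induction k with
  | zero =>
    intro S' S hsub hcard
    have : S \ S' = ∅ := Finset.card_eq_zero.1 (le_antisymm hcard (Nat.zero_le _))
    have hSS : S = S' := le_antisymm
      (fun i hi => by
        by_contra hc
        have : i ∈ S \ S' := Finset.mem_sdiff.2 ⟨hi, hc⟩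
        rw [‹S \ S' = ∅›] at this
        exact absurd this (Finset.notMem_empty i)) hsub
    rw [hSS]
  | succ k ih =>
    intro S' S hsub hcard
    by_cases hempty : S \ S' = ∅
    · have hSS : S = S' := le_antisymm
        (fun i hi => by
          by_contra hc
          have : i ∈ S \ S' := Finset.mem_sdiff.2 ⟨hi, hc⟩
          rw [hempty] at this
          exact absurd this (Finset.notMem_empty i)) hsub
      rw [hSS]
    · obtain ⟨j, hjmem⟩ := Finset.nonempty_of_ne_empty hempty
      rw [Finset.mem_sdiff] at hjmem
      set S'' := insert j S' with hS''
      have hsub1 : S' ⊆ S'' := Finset.subset_insert j S'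
      have hsub2 : S'' ⊆ S := Finset.insert_subset hjmem.1 hsub
      have hes : Function.update (esProf m S'') j (Mt' (Fin.last m)) = esProf m S' := by
        funext i
        by_cases hij : i = j
        · subst hij
          rw [Function.update_self]
          simp [esProf, hjmem.2]
        · rw [Function.update_of_ne hij]
          by_cases hi : i ∈ S'
          · simp [esProf, hS'', hi, hij]
          · simp [esProf, hS'', hi, hij]
      have hstep : probOn φ (esProf m S') (Finset.Iic t)
          ≤ probOn φ (esProf m S'') (Finset.Iic t) := by
        have h := hsp j (esProf m S'') (Mt' (Fin.last m)) t
        have hUC : UC (esProf m S'' j) t = Finset.Iic t := by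
          have : esProf m S'' j = Mt 0 := by
            simp [esProf, hS'', Finset.mem_insert_self]
          rw [this, UC_Mt0]
        rw [hUC, hes] at h
        exact h
      refine le_trans hstep (ih S'' S hsub2 ?_)
      have : S \ S'' = (S \ S').erase j := by
        rw [hS'']
        ext i
        simp only [Finset.mem_sdiff, Finset.mem_erase, Finset.mem_insert]
        tauto
      rw [this]
      have := Finset.card_erase_of_mem (Finset.mem_sdiff.2 hjmem)
      omega

end ESsec
section Master
variable {m n g : ℕ} {φ : RSCF m n}

/-- The master lemma: `F_t(P)` equals `F_t` of the extreme profile of `S_t(P)`. -/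
lemma master (hφ : IsRSCF φ) (hun : Unanimous φ) (hsp : StrategyProof φ)
    (hne : (univ : Finset (Fin n)).Nonempty) (t : Fin (m+1)) (ht : (t:ℕ) < m)
    (P : Profile m n) :
    probOn φ P (Finset.Iic t)
      = probOn φ (esProf m (univ.filter fun i => peak (P i) ≤ t)) (Finset.Iic t) := by
  set s : Fin (m+1) := ⟨(t:ℕ)+1, by omega⟩ with hs
  set W : Profile m n := fun i => if peak (P i) ≤ t then Mt t else Mt' s with hW
  have hnot_last : ¬ ((Fin.last m : Fin (m+1)) ≤ t) := by
    rw [Fin.le_def, Fin.val_last]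
    omega
  -- P reduces to W
  have h1 : probOn φ P (Finset.Iic t) = probOn φ W (Finset.Iic t) := by
    have hA := phaseA hφ hun hsp hne t _ P (le_refl _)
    set Pa : Profile m n := fun i => if peak (P i) ≤ t then Mt t else P i with hPa
    have hB := phaseB hφ hun hsp hne t ht _ Pa (le_refl _)
    have hWeq : (fun i => if t < peak (Pa i) then Mt' ⟨(t:ℕ)+1, by omega⟩ else Pa i) = W := by
      funext i
      by_cases h : peak (P i) ≤ t
      · have : Pa i = Mt t := by rw [hPa]; simp [h]
        rw [this]
        rw [if_neg (by rw [peak_Mt]; exact lt_irrefl t), hW]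
        simp [h]
      · have : Pa i = P i := by rw [hPa]; simp [h]
        rw [this, if_pos (lt_of_not_ge h), hW]
        simp [h, hs]
    rw [hA, hB, hWeq]
  -- esProf S reduces to W as well
  have h2 : probOn φ (esProf m (univ.filter fun i => peak (P i) ≤ t)) (Finset.Iic t)
      = probOn φ W (Finset.Iic t) := by
    set S := univ.filter fun i => peak (P i) ≤ t with hS
    set E : Profile m n := esProf m S with hE
    have hA := phaseA hφ hun hsp hne t _ E (le_refl _)
    set Ea : Profile m n := fun i => if peak (E i) ≤ t then Mt t else E i with hEa
    have hB := phaseB hφ hun hsp hne t ht _ Ea (le_refl _)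
    have hWeq : (fun i => if t < peak (Ea i) then Mt' ⟨(t:ℕ)+1, by omega⟩ else Ea i) = W := by
      funext i
      by_cases h : peak (P i) ≤ t
      · have hiS : i ∈ S := by rw [hS]; simp [h]
        have hpk : peak (E i) ≤ t := by
          rw [hE, peak_esProf, if_pos hiS]
          exact Fin.zero_le t
        have : Ea i = Mt t := by rw [hEa]; simp [hpk]
        rw [this, if_neg (by rw [peak_Mt]; exact lt_irrefl t), hW]
        simp [h]
      · have hiS : i ∉ S := by rw [hS]; simp [h]
        have hpk : ¬ peak (E i) ≤ t := by
          rw [hE, peak_esProf, if_neg hiS]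
          exact hnot_last
        have hEMt' : E i = Mt' (Fin.last m) := by rw [hE]; simp [esProf, hiS]
        have hEa_i : Ea i = Mt' (Fin.last m) := by rw [hEa]; simp only [if_neg hpk]; exact hEMt'
        rw [hEa_i, if_pos (by rw [peak_Mt', Fin.lt_def, Fin.val_last]; omega)]
        simp [hW, hs, h]

    rw [hA, hB, hWeq]
  rw [h1, ← h2]

end Master

section Canon
variable {m n g : ℕ}

/-- Canonical per-group coalitions realizing a vector `γ`. -/
noncomputable def canonSq (grp : Fin n → Fin g) (γ : Fin g → Fin (n+1)) (q : Fin g) :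
    Finset (Fin n) :=
  (Finset.exists_subset_card_eq (s := univ.filter fun i => grp i = q)
    (n := min (γ q : ℕ) (gsize grp q))
    (by rw [gsize]; exact min_le_right _ _)).choose

lemma canonSq_spec (grp : Fin n → Fin g) (γ : Fin g → Fin (n+1)) (q : Fin g) :
    canonSq grp γ q ⊆ (univ.filter fun i => grp i = q)
      ∧ (canonSq grp γ q).card = min (γ q : ℕ) (gsize grp q) :=
  (Finset.exists_subset_card_eq (s := univ.filter fun i => grp i = q)
    (n := min (γ q : ℕ) (gsize grp q))
    (by rw [gsize]; exact min_le_right _ _)).choose_spec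

/-- Canonical coalition with group counts `min (γ q) (gsize q)`. -/
noncomputable def canonS (grp : Fin n → Fin g) (γ : Fin g → Fin (n+1)) : Finset (Fin n) :=
  univ.filter fun i => i ∈ canonSq grp γ (grp i)

lemma canonS_group (grp : Fin n → Fin g) (γ : Fin g → Fin (n+1)) (q : Fin g) :
    (univ.filter fun i => grp i = q ∧ i ∈ canonS grp γ) = canonSq grp γ q := by
  ext i
  simp only [mem_filter, mem_univ, true_and, canonS]
  constructor
  · rintro ⟨hq, hm⟩
    rwa [hq] at hm
  · intro hm
    have hq : grp i = q := by
      have := (canonSq_spec grp γ q).1 hm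
      simpa using this
    exact ⟨hq, by rwa [hq]⟩

lemma canonS_count (grp : Fin n → Fin g) (γ : Fin g → Fin (n+1)) (q : Fin g) :
    (univ.filter fun i => grp i = q ∧ i ∈ canonS grp γ).card
      = min (γ q : ℕ) (gsize grp q) := by
  rw [canonS_group]
  exact (canonSq_spec grp γ q).2

lemma canonS_count_valid (grp : Fin n → Fin g) {γ : Fin g → Fin (n+1)}
    (hγ : GammaValid grp γ) (q : Fin g) :
    (univ.filter fun i => grp i = q ∧ i ∈ canonS grp γ).card = (γ q : ℕ) := by
  rw [canonS_count]
  exact min_eq_left (hγ q)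

/-- `alphaVec` is always valid. -/
lemma alphaVec_valid (grp : Fin n → Fin g) (P : Profile m n) (t : Fin (m+1)) :
    GammaValid grp (alphaVec grp P t) := by
  intro q
  show (univ.filter fun i => grp i = q ∧ peak (P i) ≤ t).card ≤ gsize grp q
  rw [gsize]
  apply Finset.card_le_card
  intro i hi
  simp only [mem_filter, mem_univ, true_and] at *
  exact hi.1

lemma alphaVec_count (grp : Fin n → Fin g) (P : Profile m n) (t : Fin (m+1)) (q : Fin g) :
    ((alphaVec grp P t q : ℕ))
      = (univ.filter fun i => grp i = q ∧ i ∈ (univ.filter fun j => peak (P j) ≤ t)).card := by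
  show (univ.filter fun i => grp i = q ∧ peak (P i) ≤ t).card = _
  congr 1
  ext i
  simp only [mem_filter, mem_univ, true_and]

end Canon
section Forward
variable {m n g : ℕ}

lemma Iic_last_univ : Finset.Iic (Fin.last m) = (univ : Finset (Fin (m+1))) := by
  ext b; simp [Fin.le_last]

lemma Iio_zero_empty : Finset.Iio (0 : Fin (m+1)) = ∅ := by
  ext b; simp

lemma forward_dir (grp : Fin n → Fin g) (φ : RSCF m n) (hφ : IsRSCF φ)
    (hne : (univ : Finset (Fin n)).Nonempty)
    (hun : Unanimous φ) (hsp : StrategyProof φ) (hga : GroupAnon grp φ) :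
    IsPFGBR grp φ := by
  classical
  refine ⟨fun γ b => φ (esProf m (canonS grp γ)) b, ?_, ?_, ?_, ?_, ?_⟩
  · -- probability distributions
    exact fun γ _ => hφ _
  · -- β at the zero vector
    have hempty : canonS grp (fun _ => (0 : Fin (n+1))) = ∅ := by
      rw [Finset.eq_empty_iff_forall_notMem]
      intro i hi
      simp only [canonS, mem_filter, mem_univ, true_and] at hi
      have hcard := (canonSq_spec grp (fun _ => (0 : Fin (n+1))) (grp i)).2
      simp only [Fin.val_zero, Nat.zero_min, min_eq_left (Nat.zero_le _)] at hcard
      have hSqe : canonSq grp (fun _ => (0 : Fin (n+1))) (grp i) = ∅ :=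
        Finset.card_eq_zero.1 (by simpa using hcard)
      rw [hSqe] at hi
      exact absurd hi (Finset.notMem_empty i)
    show φ (esProf m (canonS grp fun _ => 0)) (Fin.last m) = 1
    rw [hempty]
    apply hun
    intro i
    simp [esProf, peak_Mt']
  · -- β at the top vector
    have huniv : canonS grp (gammaTop grp) = univ := by
      rw [Finset.eq_univ_iff_forall]
      intro i
      simp only [canonS, mem_filter, mem_univ, true_and]
      have hspec := canonSq_spec grp (gammaTop grp) (grp i)
      have hcard : (canonSq grp (gammaTop grp) (grp i)).card
          = (univ.filter fun j => grp j = grp i).card := by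
        rw [hspec.2]
        simp [gammaTop, gsize]
      have heq : canonSq grp (gammaTop grp) (grp i) = univ.filter fun j => grp j = grp i :=
        Finset.eq_of_subset_of_card_le hspec.1 (le_of_eq hcard.symm)
      rw [heq]
      simp
    show φ (esProf m (canonS grp (gammaTop grp))) 0 = 1
    rw [huniv]
    apply hun
    intro i
    simp [esProf, peak_Mt]
  · -- monotonicity
    intro γ γ' hγ hγ' hle t
    have hcount : ∀ q, (γ' q : ℕ) ≤ (univ.filter fun i => grp i = q ∧ i ∈ canonS grp γ).card := by
      intro q
      rw [canonS_count_valid grp hγ q]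
      exact Fin.le_def.1 (hle q)
    have hex : ∀ q, ∃ T ⊆ (univ.filter fun i => grp i = q ∧ i ∈ canonS grp γ),
        T.card = (γ' q : ℕ) := fun q => Finset.exists_subset_card_eq (hcount q)
    choose T hTsub hTcard using hex
    set T' : Finset (Fin n) := univ.filter fun i => i ∈ T (grp i) with hT'
    have hTgrp : ∀ q, (univ.filter fun i => grp i = q ∧ i ∈ T') = T q := by
      intro q
      ext i
      simp only [mem_filter, mem_univ, true_and, hT']
      constructor
      · rintro ⟨hq, hm⟩
        rwa [hq] at hm
      · intro hm
        have hiq := hTsub q hm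
        simp only [mem_filter, mem_univ, true_and] at hiq
        exact ⟨hiq.1, by rwa [hiq.1]⟩
    have hsub : T' ⊆ canonS grp γ := by
      intro i hi
      simp only [hT', mem_filter, mem_univ, true_and] at hi
      have := hTsub (grp i) hi
      simp only [mem_filter, mem_univ, true_and] at this
      exact this
    have h1 : φ (esProf m (canonS grp γ')) = φ (esProf m T') := by
      apply es_count_eq grp hga
      intro q
      rw [canonS_count_valid grp hγ' q, hTgrp q, hTcard q]
    show probOn φ (esProf m (canonS grp γ')) (Finset.Iic t)
        ≤ probOn φ (esProf m (canonS grp γ)) (Finset.Iic t)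
    rw [show probOn φ (esProf m (canonS grp γ')) (Finset.Iic t)
        = probOn φ (esProf m T') (Finset.Iic t) by unfold probOn; rw [h1]]
    exact es_mono hφ hsp t _ T' (canonS grp γ) hsub (le_refl _)
  · -- the formula
    intro P t
    have claimA : ∀ (t' : Fin (m+1)), probOn φ P (Finset.Iic t')
        = probOn φ (esProf m (canonS grp (alphaVec grp P t'))) (Finset.Iic t') := by
      intro t'
      by_cases ht' : (t' : ℕ) < m
      · rw [master hφ hun hsp hne t' ht' P]
        have := es_count_eq grp hga (S := univ.filter fun i => peak (P i) ≤ t')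
          (S' := canonS grp (alphaVec grp P t')) (fun q => by
            rw [canonS_count_valid grp (alphaVec_valid grp P t') q, ← alphaVec_count])
        unfold probOn
        rw [this]
      · have hlast : t' = Fin.last m := by
          have := t'.isLt
          apply Fin.ext
          rw [Fin.val_last]
          omega
        rw [hlast, Iic_last_univ, probOn_univ hφ, probOn_univ hφ]
    have claimB : probOn φ P (Finset.Iio t)
        = ∑ b ∈ Finset.Iio t, φ (esProf m (canonS grp (alphaLtVec grp P t))) b := by
      by_cases ht0 : (t : ℕ) = 0
      · have : t = 0 := Fin.ext ht0
        rw [this, Iio_zero_empty]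
        simp [probOn]
      · set t' : Fin (m+1) := ⟨(t:ℕ) - 1, by have := t.isLt; omega⟩ with ht'
        have hIio : Finset.Iio t = Finset.Iic t' := by
          ext b
          simp only [Finset.mem_Iio, Finset.mem_Iic, Fin.lt_def, Fin.le_def, ht']
          omega
        have hvec : alphaLtVec grp P t = alphaVec grp P t' := by
          funext q
          apply Fin.ext
          show (univ.filter fun i => grp i = q ∧ peak (P i) < t).card
            = (univ.filter fun i => grp i = q ∧ peak (P i) ≤ t').card
          congr 1
          ext i
          simp only [mem_filter, mem_univ, true_and, Fin.lt_def, Fin.le_def, ht']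
          omega
        rw [hIio, hvec]
        exact claimA t'
    have hsplit : probOn φ P (Finset.Iic t) = φ P t + probOn φ P (Finset.Iio t) := by
      unfold probOn
      rw [← Finset.Iio_insert, Finset.sum_insert (by simp)]
    have hA := claimA t
    show φ P t = probOn φ (esProf m (canonS grp (alphaVec grp P t))) (Finset.Iic t)
      - ∑ b ∈ Finset.Iio t, φ (esProf m (canonS grp (alphaLtVec grp P t))) b
    rw [← hA, ← claimB, hsplit]
    ring

end Forward
section Backward
variable {m n g : ℕ}

lemma backward_dir (grp : Fin n → Fin g) (φ : RSCF m n) (hφ : IsRSCF φ)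
    (h : IsPFGBR grp φ) : Unanimous φ ∧ StrategyProof φ ∧ GroupAnon grp φ := by
  classical
  obtain ⟨β, hprob, hzero, htop, hmono, hform⟩ := h
  have hvalid0 : GammaValid grp (fun _ => (0 : Fin (n+1))) := fun q => Nat.zero_le _
  have hvalidTop : GammaValid grp (gammaTop grp) := fun q => le_of_eq rfl
  -- congruence for alphaVec
  have hacongr : ∀ (P P' : Profile m n) (t t' : Fin (m+1)),
      (∀ i, peak (P i) ≤ t ↔ peak (P' i) ≤ t') →
      alphaVec grp P t = alphaVec grp P' t' := by
    intro P P' t t' hiff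
    funext q
    apply Fin.ext
    show (univ.filter fun i => grp i = q ∧ peak (P i) ≤ t).card
      = (univ.filter fun i => grp i = q ∧ peak (P' i) ≤ t').card
    congr 1
    ext i
    simp only [mem_filter, mem_univ, true_and]
    rw [hiff i]
  -- the single step of the formula
  have hstep : ∀ (P : Profile m n) (t t' : Fin (m+1)), (t:ℕ) = (t':ℕ)+1 →
      φ P t = (∑ b ∈ Finset.Iic t, β (alphaVec grp P t) b)
        - ∑ b ∈ Finset.Iic t', β (alphaVec grp P t') b := by
    intro P t t' htt
    have hIio : Finset.Iio t = Finset.Iic t' := by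
      ext b
      simp only [Finset.mem_Iio, Finset.mem_Iic, Fin.lt_def, Fin.le_def]
      omega
    have hvec : alphaLtVec grp P t = alphaVec grp P t' := by
      funext q
      apply Fin.ext
      show (univ.filter fun i => grp i = q ∧ peak (P i) < t).card
        = (univ.filter fun i => grp i = q ∧ peak (P i) ≤ t').card
      congr 1
      ext i
      simp only [mem_filter, mem_univ, true_and, Fin.lt_def, Fin.le_def]
      omega
    rw [hform P t, hIio, hvec]
  -- the CDF identity
  have hcdf : ∀ (P : Profile m n) (t : Fin (m+1)),
      probOn φ P (Finset.Iic t) = ∑ b ∈ Finset.Iic t, β (alphaVec grp P t) b := by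
    intro P t
    induction t using Fin.induction with
    | zero =>
      have hIic : Finset.Iic (0 : Fin (m+1)) = {0} := by
        ext b
        simp [Fin.le_zero_iff]
      have h0 := hform P 0
      have hIio : Finset.Iio (0 : Fin (m+1)) = ∅ := by ext b; simp
      rw [hIio] at h0
      simp only [Finset.sum_empty, sub_zero] at h0
      rw [show probOn φ P (Finset.Iic (0 : Fin (m+1))) = φ P 0 from by
        rw [probOn, hIic, Finset.sum_singleton], h0]
    | succ i ih =>
      have hins : Finset.Iic i.succ = insert i.succ (Finset.Iic i.castSucc) := by
        ext b
        simp only [Finset.mem_Iic, Finset.mem_insert, Fin.le_def, Fin.val_succ,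
          Fin.coe_castSucc]
        constructor
        · intro hb
          rcases Nat.lt_or_ge (b:ℕ) ((i:ℕ)+1) with h' | h'
          · right; omega
          · left; apply Fin.ext; simp only [Fin.val_succ]; omega
        · intro hb
          rcases hb with rfl | hb
          · simp
          · omega
      have hnotmem : i.succ ∉ Finset.Iic i.castSucc := by
        simp only [Finset.mem_Iic, Fin.le_def, Fin.val_succ, Fin.coe_castSucc]
        omega
      have hsum : probOn φ P (Finset.Iic i.succ)
          = φ P i.succ + probOn φ P (Finset.Iic i.castSucc) := by
        rw [probOn, hins, Finset.sum_insert hnotmem]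
        rfl
      rw [hsum, ih, hstep P i.succ i.castSucc (by simp)]
      ring
  -- monotonicity of the CDF
  have hcdfmono : ∀ (P P2 : Profile m n) (t : Fin (m+1)),
      (∀ q, ((alphaVec grp P2 t) q : ℕ) ≤ ((alphaVec grp P t) q : ℕ)) →
      (∑ b ∈ Finset.Iic t, β (alphaVec grp P2 t) b)
        ≤ ∑ b ∈ Finset.Iic t, β (alphaVec grp P t) b := by
    intro P P2 t hq
    exact hmono _ _ (alphaVec_valid grp P t) (alphaVec_valid grp P2 t)
      (fun q => Fin.le_def.2 (hq q)) t
  refine ⟨?_, ?_, ?_⟩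
  · -- Unanimity
    intro P a hall
    have hv1 : alphaVec grp P a = gammaTop grp := by
      funext q
      apply Fin.ext
      show (univ.filter fun i => grp i = q ∧ peak (P i) ≤ a).card = gsize grp q
      rw [gsize]
      congr 1
      ext i
      simp only [mem_filter, mem_univ, true_and, and_iff_left_iff_imp]
      intro _
      rw [hall i]
    have hv2 : alphaLtVec grp P a = fun _ => (0 : Fin (n+1)) := by
      funext q
      apply Fin.ext
      show (univ.filter fun i => grp i = q ∧ peak (P i) < a).card = 0
      rw [Finset.card_eq_zero, Finset.eq_empty_iff_forall_notMem]
      intro i hi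
      simp only [mem_filter, mem_univ, true_and] at hi
      rw [hall i] at hi
      exact absurd hi.2 (lt_irrefl a)
    have hsum1 : (∑ b ∈ Finset.Iic a, β (gammaTop grp) b) = 1 := by
      have hp := hprob (gammaTop grp) hvalidTop
      apply le_antisymm
      · rw [← hp.2]
        exact Finset.sum_le_sum_of_subset_of_nonneg (Finset.subset_univ _)
          (fun b _ _ => hp.1 b)
      · rw [← htop]
        exact Finset.single_le_sum (fun b _ => hp.1 b)
          (Finset.mem_Iic.2 (Fin.zero_le a))
    have hsum2 : (∑ b ∈ Finset.Iio a, β (fun _ => (0 : Fin (n+1))) b) = 0 := by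
      apply Finset.sum_eq_zero
      intro b hb
      rw [Finset.mem_Iio] at hb
      have hp := hprob _ hvalid0
      have hne : b ≠ Fin.last m := by
        intro he
        rw [he] at hb
        exact absurd (lt_of_lt_of_le hb (Fin.le_last a)) (lt_irrefl _)
      have h2 : β (fun _ => (0 : Fin (n+1))) b + β (fun _ => (0 : Fin (n+1))) (Fin.last m)
          ≤ 1 := by
        rw [← hp.2]
        calc β (fun _ => (0:Fin (n+1))) b + β (fun _ => (0:Fin (n+1))) (Fin.last m)
            = ∑ c ∈ ({b, Fin.last m} : Finset (Fin (m+1))), β (fun _ => (0:Fin (n+1))) c :=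
              (Finset.sum_pair hne).symm
          _ ≤ ∑ c, β (fun _ => (0:Fin (n+1))) c :=
              Finset.sum_le_sum_of_subset_of_nonneg (Finset.subset_univ _)
                (fun c _ _ => hp.1 c)
      have := hp.1 b
      rw [hzero] at h2
      linarith
    rw [hform P a, hv1, hv2, hsum1, hsum2]
    norm_num
  · -- Strategy-proofness
    intro i P P' a
    set Q : Profile m n := Function.update P i P' with hQ
    set l := (UC (P i) a).min' (UC_nonempty _ _) with hl
    set r := (UC (P i) a).max' (UC_nonempty _ _) with hr
    have hUC : UC (P i) a = Finset.Icc l r := UC_eq_Icc (P i) a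
    have hlp : l ≤ peak (P i) := UC_min'_le_peak _ _
    have hpr : peak (P i) ≤ r := peak_le_UC_max' _ _
    have hlr : l ≤ r := le_trans hlp hpr
    have hsplit : ∀ X : Profile m n, probOn φ X (Finset.Icc l r)
        = probOn φ X (Finset.Iic r) - probOn φ X (Finset.Iio l) := by
      intro X
      have := probOn_union (φ := φ) X (Iio_disj_Icc_fin l r)
      rw [Iio_union_Icc_fin hlr] at this
      linarith
    rw [hUC, hsplit Q, hsplit P]
    -- the Iio-l parts
    have hIioP : ∀ X Y : Profile m n,
        (∀ j, peak (X j) ≤ peak (Y j)) →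
        probOn φ X (Finset.Iio l) ≥ probOn φ Y (Finset.Iio l) → True := fun _ _ _ _ => trivial
    rcases Nat.eq_zero_or_pos (l : ℕ) with hl0 | hlpos
    · -- l = 0 : the Iio parts vanish
      have hIio : Finset.Iio l = ∅ := by
        ext b
        simp only [Finset.mem_Iio, Fin.lt_def, Finset.notMem_empty, iff_false, not_lt, hl0]
        omega
      have hemp : ∀ X : Profile m n, probOn φ X (∅ : Finset (Fin (m+1))) = 0 :=
        fun X => Finset.sum_empty
      rw [hIio, hemp, hemp, sub_zero, sub_zero, hcdf Q r, hcdf P r]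
      apply hcdfmono
      intro q
      show (univ.filter fun j => grp j = q ∧ peak (Q j) ≤ r).card
        ≤ (univ.filter fun j => grp j = q ∧ peak (P j) ≤ r).card
      apply Finset.card_le_card
      intro j hj
      simp only [mem_filter, mem_univ, true_and] at hj ⊢
      refine ⟨hj.1, ?_⟩
      by_cases hij : j = i
      · subst hij; exact hpr
      · rw [hQ, Function.update_of_ne hij] at hj; exact hj.2
    · -- l ≥ 1
      set l' : Fin (m+1) := ⟨(l:ℕ) - 1, by have := l.isLt; omega⟩ with hl'
      have hIio : Finset.Iio l = Finset.Iic l' := by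
        ext b
        simp only [Finset.mem_Iio, Finset.mem_Iic, Fin.lt_def, Fin.le_def, hl']
        omega
      have hl'l : (l' : ℕ) < (l : ℕ) := by
        rw [hl']; show (l:ℕ) - 1 < l; omega
      rw [hIio]
      rw [hcdf Q r, hcdf P r, hcdf Q l', hcdf P l']
      rcases le_or_gt (peak (P i)) (peak P') with hpp | hpp
      · -- peak moves (weakly) right
        have h1 : (∑ b ∈ Finset.Iic r, β (alphaVec grp Q r) b)
            ≤ ∑ b ∈ Finset.Iic r, β (alphaVec grp P r) b := by
          apply hcdfmono
          intro q
          show (univ.filter fun j => grp j = q ∧ peak (Q j) ≤ r).card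
            ≤ (univ.filter fun j => grp j = q ∧ peak (P j) ≤ r).card
          apply Finset.card_le_card
          intro j hj
          simp only [mem_filter, mem_univ, true_and] at hj ⊢
          refine ⟨hj.1, ?_⟩
          by_cases hij : j = i
          · subst hij; exact hpr
          · rw [hQ, Function.update_of_ne hij] at hj; exact hj.2
        have h2 : alphaVec grp Q l' = alphaVec grp P l' := by
          apply hacongr
          intro j
          by_cases hij : j = i
          · subst hij
            rw [hQ, Function.update_self]
            constructor
            · intro hc
              exact absurd (lt_of_le_of_lt (le_trans (le_trans hlp hpp) hc)
                (lt_of_le_of_lt (le_of_eq rfl) (Fin.lt_def.2 hl'l))) (lt_irrefl _)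
            · intro hc
              exact absurd (lt_of_le_of_lt (le_trans hlp hc)
                (Fin.lt_def.2 hl'l)) (lt_irrefl _)
          · rw [hQ, Function.update_of_ne hij]
        rw [h2]
        linarith
      · -- peak moves left
        have h1 : alphaVec grp Q r = alphaVec grp P r := by
          apply hacongr
          intro j
          by_cases hij : j = i
          · subst hij
            rw [hQ, Function.update_self]
            constructor
            · intro _; exact hpr
            · intro _; exact le_trans (le_of_lt hpp) hpr
          · rw [hQ, Function.update_of_ne hij]
        have h2 : (∑ b ∈ Finset.Iic l', β (alphaVec grp P l') b)
            ≤ ∑ b ∈ Finset.Iic l', β (alphaVec grp Q l') b := by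
          apply hcdfmono
          intro q
          show (univ.filter fun j => grp j = q ∧ peak (P j) ≤ l').card
            ≤ (univ.filter fun j => grp j = q ∧ peak (Q j) ≤ l').card
          apply Finset.card_le_card
          intro j hj
          simp only [mem_filter, mem_univ, true_and] at hj ⊢
          refine ⟨hj.1, ?_⟩
          by_cases hij : j = i
          · subst hij
            exact absurd (lt_of_le_of_lt (le_trans hlp hj.2) (Fin.lt_def.2 hl'l))
              (lt_irrefl _)
          · rw [hQ, Function.update_of_ne hij]; exact hj.2
        rw [h1]
        linarith
  · -- Group anonymity
    intro π hπ P
    funext t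
    have hcount : ∀ (t' : Fin (m+1)) (q : Fin g),
        (univ.filter fun j => grp j = q ∧ peak (P (π j)) ≤ t').card
          = (univ.filter fun j => grp j = q ∧ peak (P j) ≤ t').card := by
      intro t' q
      apply Finset.card_bij' (fun j _ => π j) (fun j _ => π.symm j)
      · intro j hj
        simp only [mem_filter, mem_univ, true_and] at *
        exact ⟨by rw [hπ j]; exact hj.1, hj.2⟩
      · intro j hj
        simp only [mem_filter, mem_univ, true_and] at *
        refine ⟨?_, ?_⟩
        · rw [← hj.1]
          conv_rhs => rw [show j = π (π.symm j) from (Equiv.apply_symm_apply π j).symm]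
          rw [hπ (π.symm j)]
        · rw [Equiv.apply_symm_apply]
          exact hj.2
      · intro j _; exact Equiv.symm_apply_apply π j
      · intro j _; exact Equiv.apply_symm_apply π j
    have hcountlt : ∀ (t' : Fin (m+1)) (q : Fin g),
        (univ.filter fun j => grp j = q ∧ peak (P (π j)) < t').card
          = (univ.filter fun j => grp j = q ∧ peak (P j) < t').card := by
      intro t' q
      apply Finset.card_bij' (fun j _ => π j) (fun j _ => π.symm j)
      · intro j hj
        simp only [mem_filter, mem_univ, true_and] at *
        exact ⟨by rw [hπ j]; exact hj.1, hj.2⟩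
      · intro j hj
        simp only [mem_filter, mem_univ, true_and] at *
        refine ⟨?_, ?_⟩
        · rw [← hj.1]
          conv_rhs => rw [show j = π (π.symm j) from (Equiv.apply_symm_apply π j).symm]
          rw [hπ (π.symm j)]
        · rw [Equiv.apply_symm_apply]
          exact hj.2
      · intro j _; exact Equiv.symm_apply_apply π j
      · intro j _; exact Equiv.apply_symm_apply π j
    have hv1 : alphaVec grp (fun j => P (π j)) t = alphaVec grp P t := by
      funext q
      apply Fin.ext
      exact hcount t q
    have hv2 : alphaLtVec grp (fun j => P (π j)) t = alphaLtVec grp P t := by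
      funext q
      apply Fin.ext
      exact hcountlt t q
    rw [hform P t, hform (fun j => P (π j)) t, hv1, hv2]

end Backward
/-- An RSCF is unanimous, strategy-proof and group-wise
anonymous iff it is a probabilistic fixed group ballot rule. -/
theorem unanimous_strategyProof_groupAnon_iff_PFGBR {m n g : ℕ} (hn : 2 ≤ n)
    (grp : Fin n → Fin g) (hsurj : Function.Surjective grp)
    (φ : RSCF m n) (hφ : IsRSCF φ) :
    (Unanimous φ ∧ StrategyProof φ ∧ GroupAnon grp φ) ↔ IsPFGBR grp φ := by
  have hne : (univ : Finset (Fin n)).Nonempty := ⟨⟨0, by omega⟩, mem_univ _⟩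
  constructor
  · rintro ⟨hun, hsp, hga⟩
    exact forward_dir grp φ hφ hne hun hsp hga
  · intro h
    exact backward_dir grp φ hφ h
end

section
/- Let φ be a probabilistic fixed ballot rule with probabilistic ballots {β_S}_{S⊆N}, and suppose φ is group-wise anonymous. Then for any S, S' ⊆ N such that |S ∩ N_q| = |S' ∩ N_q| for every group q ∈ G, we have β_S = β_{S'}. -/
open Finset

/-! ### Auxiliary material for Statement 3 -/

/-- The single-peaked preference with peak `0` (the identity order). -/
def topPref (m : ℕ) : SPPref m :=
  ⟨Equiv.refl _, by
    rintro a b (⟨-, hab⟩ | ⟨h1, h2⟩)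
    · exact hab
    · exact absurd (lt_of_lt_of_le h1 h2) (by simp)⟩

/-- The single-peaked preference with peak `Fin.last m` (the reversed order). -/
def botPref (m : ℕ) : SPPref m :=
  ⟨Fin.revPerm, by
    rintro a b (⟨h1, h2⟩ | ⟨h1, -⟩)
    · exact absurd (lt_of_le_of_lt h1 h2) (by simp [Fin.rev_zero, Fin.le_last, not_lt,
        Fin.last_le_iff])
    · simpa using Fin.rev_lt_rev.mpr h1⟩

/-- The profile where members of `S` have peak `0` and the others peak `Fin.last m`. -/
def profileOf {m n : ℕ} (S : Finset (Fin n)) : Profile m n :=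
  fun i => if i ∈ S then topPref m else botPref m

lemma peak_profileOf {m n : ℕ} (S : Finset (Fin n)) (i : Fin n) :
    peak (profileOf (m := m) S i) = if i ∈ S then 0 else Fin.last m := by
  by_cases hi : i ∈ S <;>
    simp [profileOf, hi, peak, topPref, botPref, Fin.rev_zero]

lemma Iic_last_eq_univ {m : ℕ} : Iic (Fin.last m) = (univ : Finset (Fin (m + 1))) := by
  ext b; simp [Fin.le_last]

lemma phi_profileOf {m n : ℕ} (φ : RSCF m n)
    (β : Finset (Fin n) → Fin (m + 1) → ℝ) (hβ : IsPFBRWith β φ)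
    (S : Finset (Fin n)) (t : Fin (m + 1)) :
    φ (profileOf S) t = β S t := by
  classical
  obtain ⟨hprob, -, -, -, hval⟩ := hβ
  rw [hval]
  have hA : ∑ b ∈ Iic t, β (univ.filter fun i => peak (profileOf S i) ≤ t) b
      = ∑ b ∈ Iic t, β S b := by
    by_cases ht : t = Fin.last m
    · subst ht
      rw [Iic_last_eq_univ, (hprob _).2, (hprob S).2]
    · have hS : (univ.filter fun i => peak (profileOf (m := m) S i) ≤ t) = S := by
        ext i
        simp only [mem_filter, mem_univ, true_and, peak_profileOf]
        by_cases hi : i ∈ S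
        · simp [hi, Fin.zero_le]
        · simp only [hi, if_false, iff_false]
          intro hle
          exact ht (le_antisymm (Fin.le_last t) hle)
      rw [hS]
  have hB : ∑ b ∈ Iio t, β (univ.filter fun i => peak (profileOf S i) < t) b
      = ∑ b ∈ Iio t, β S b := by
    by_cases ht : t = 0
    · have hIio : (Iio t) = (∅ : Finset (Fin (m + 1))) := by
        subst ht; ext b; simp
      rw [hIio]; simp
    · have hS : (univ.filter fun i => peak (profileOf (m := m) S i) < t) = S := by
        ext i
        simp only [mem_filter, mem_univ, true_and, peak_profileOf]
        by_cases hi : i ∈ S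
        · simp [hi, Fin.pos_iff_ne_zero.mpr ht]
        · simp [hi, not_lt, Fin.le_last]
      rw [hS]
  rw [hA, hB, ← Finset.Iio_insert, Finset.sum_insert (by simp)]
  ring

lemma exists_group_perm {n g : ℕ} (grp : Fin n → Fin g) (S S' : Finset (Fin n))
    (h : ∀ q, (S.filter fun i => grp i = q).card = (S'.filter fun i => grp i = q).card) :
    ∃ π : Equiv.Perm (Fin n), (∀ i, grp (π i) = grp i) ∧ ∀ i, π i ∈ S' ↔ i ∈ S := by
  classical
  let c : Fin n → Fin g × Bool := fun i => (grp i, decide (i ∈ S))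
  let c' : Fin n → Fin g × Bool := fun i => (grp i, decide (i ∈ S'))
  have hfilter : ∀ (T : Finset (Fin n)) (q : Fin g),
      (univ.filter fun i => grp i = q ∧ i ∈ T).card = (T.filter fun i => grp i = q).card := by
    intro T q
    congr 1
    ext i
    simp [and_comm]
  have hcard : ∀ b : Fin g × Bool,
      Fintype.card {i // c i = b} = Fintype.card {i // c' i = b} := by
    rintro ⟨q, bb⟩
    have h1 : ∀ (T : Finset (Fin n)),
        (univ.filter fun i => grp i = q ∧ i ∈ T).card
          + (univ.filter fun i => grp i = q ∧ i ∉ T).card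
          = (univ.filter fun i => grp i = q).card := by
      intro T
      rw [← Finset.filter_filter, ← Finset.filter_filter,
        Finset.card_filter_add_card_filter_not]
    cases bb
    · have e1 := h1 S
      have e2 := h1 S'
      rw [hfilter S q] at e1
      rw [hfilter S' q] at e2
      simp only [Fintype.card_subtype, c, c', Prod.mk.injEq, decide_eq_false_iff_not]
      try simp only [Finset.filter_congr_decidable] at e1 e2 ⊢
      have hq := h q
      omega
    · simp only [Fintype.card_subtype, c, c', Prod.mk.injEq, decide_eq_true_eq]
      rw [hfilter S q, hfilter S' q]
      exact h q
  let e : ∀ b : Fin g × Bool, {i // c i = b} ≃ {i // c' i = b} :=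
    fun b => Fintype.equivOfCardEq (hcard b)
  refine ⟨Equiv.ofFiberEquiv e, fun i => ?_, fun i => ?_⟩
  · have := Equiv.ofFiberEquiv_map e i
    exact congrArg Prod.fst this
  · have := Equiv.ofFiberEquiv_map e i
    have h2 := congrArg Prod.snd this
    simpa [c, c'] using h2

/-- For a group-wise anonymous PFBR, ballots of sets with the
same number of members in each group coincide. -/
theorem PFBR_groupAnon_ballots_eq {m n g : ℕ} (hn : 2 ≤ n)
    (grp : Fin n → Fin g) (hsurj : Function.Surjective grp)
    (φ : RSCF m n) (hφ : IsRSCF φ)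
    (β : Finset (Fin n) → Fin (m + 1) → ℝ) (hβ : IsPFBRWith β φ)
    (hanon : GroupAnon grp φ) (S S' : Finset (Fin n))
    (h : ∀ q, (S.filter fun i => grp i = q).card = (S'.filter fun i => grp i = q).card) :
    β S = β S' := by
  classical
  obtain ⟨π, hgrp, hmem⟩ := exists_group_perm grp S S' h
  have hprof : (fun i => profileOf (m := m) S' (π i)) = profileOf S := by
    funext i
    simp only [profileOf]
    by_cases hi : i ∈ S
    · rw [if_pos ((hmem i).mpr hi), if_pos hi]
    · rw [if_neg (fun hc => hi ((hmem i).mp hc)), if_neg hi]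
  have key : φ (profileOf S') = φ (profileOf S) := by
    rw [hanon π hgrp (profileOf S'), hprof]
  funext t
  rw [← phi_profileOf φ β hβ S t, ← phi_profileOf φ β hβ S' t, key]
end

section
/- Every probabilistic fixed group ballot rule on 𝒟^n is a random group min-max rule, i.e., can be written as a convex combination of group min-max rules. -/
open Finset

open List in
lemma sorted_countP_iff {α : Type*} [LinearOrder α] (s : α) :
    ∀ (l : List α), l.Pairwise (· ≤ ·) → ∀ (t : ℕ) (d : α), t < l.length →
      (l.getD t d ≤ s ↔ t < l.countP (fun x => decide (x ≤ s))) := by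
  intro l
  induction l with
  | nil => intro _ t d ht; simp at ht
  | cons a l ih =>
    intro hs t d ht
    rw [List.pairwise_cons] at hs
    obtain ⟨ha, hl⟩ := hs
    rw [List.countP_cons]
    by_cases has : a ≤ s
    · cases t with
      | zero =>
        rw [if_pos (by simpa using has)]
        simpa [has] using Nat.succ_pos _
      | succ t =>
        have ht' : t < l.length := by simpa using ht
        have hih := ih hl t d ht'
        rw [if_pos (by simpa using has)]
        simp only [List.getD_cons_succ]
        rw [hih]
        simp at ht
        omega
    · have hc : l.countP (fun x => decide (x ≤ s)) = 0 := by
        rw [List.countP_eq_zero]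
        intro x hx
        simp only [decide_eq_true_eq]
        exact fun hxs => has (le_trans (ha x hx) hxs)
      cases t with
      | zero => simp [has, hc]
      | succ t =>
        have ht' : t < l.length := by simpa using ht
        rw [if_neg (by simpa using has), hc]
        simp only [List.getD_cons_succ]
        constructor
        · intro hgd
          exfalso
          have hmem : l.getD t d ∈ l := by
            rw [List.getD_eq_getElem l d ht']
            exact List.getElem_mem _
          exact has (le_trans (ha _ hmem) hgd)
        · omega

lemma tau_le_iff {m n g : ℕ} (grp : Fin n → Fin g) (P : Profile m n) (q : Fin g)
    (t : ℕ) (ht : t ≤ gsize grp q) (s : Fin (m + 1)) :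
    tau grp P q t ≤ s ↔ t ≤ ((univ.filter fun i => grp i = q ∧ peak (P i) ≤ s).card) := by
  classical
  set M : Multiset (Fin (m + 1)) :=
    (univ.filter fun i => grp i = q).val.map (fun i => peak (P i)) with hM
  set l : List (Fin (m + 1)) := Multiset.sort M (· ≤ ·) with hl
  have hlen : l.length = gsize grp q := by
    rw [hl, Multiset.length_sort, hM, Multiset.card_map]
    rfl
  have hsorted : (((0 : Fin (m+1)) :: l)).Pairwise (· ≤ ·) := by
    rw [List.pairwise_cons]
    exact ⟨fun x _ => Fin.zero_le x, Multiset.pairwise_sort _ _⟩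
  have hcount : ((0 : Fin (m+1)) :: l).countP (fun x => decide (x ≤ s))
      = (univ.filter fun i => grp i = q ∧ peak (P i) ≤ s).card + 1 := by
    rw [List.countP_cons]
    have h0 : (decide ((0 : Fin (m+1)) ≤ s)) = true := by simp [Fin.zero_le]
    rw [h0]
    simp only [if_true]
    congr 1
    have h1 : l.countP (fun x => decide (x ≤ s)) = Multiset.countP (fun x => x ≤ s) M := by
      rw [← Multiset.coe_countP, hl, Multiset.sort_eq]
    rw [h1, hM, Multiset.countP_map]
    have h2 : (univ.filter fun i => grp i = q ∧ peak (P i) ≤ s)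
        = (univ.filter fun i => grp i = q).filter (fun i => peak (P i) ≤ s) := by
      rw [Finset.filter_filter]
    rw [h2]
    rfl
  have hlt : t < ((0 : Fin (m+1)) :: l).length := by
    simp [hlen]; omega
  have := sorted_countP_iff s ((0 : Fin (m+1)) :: l) hsorted t 0 hlt
  rw [hcount] at this
  unfold tau
  rw [← hM, ← hl]
  rw [this]
  omega
/-- Every probabilistic fixed group ballot rule is a random
group min-max rule. -/
theorem PFGBR_isRandomGMMR {m n g : ℕ} (hn : 2 ≤ n)
    (grp : Fin n → Fin g) (hsurj : Function.Surjective grp)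
    (φ : RSCF m n) (h : IsPFGBR grp φ) :
    ∃ (k : ℕ) (lam : Fin k → ℝ) (F : Fin k → Profile m n → Fin (m + 1)),
      IsMixture φ k lam F ∧ ∀ w, IsGMMR grp (F w) := by
  classical
  obtain ⟨β, hprob, hbot, htopβ, hmono, hform⟩ := h
  set B : (Fin g → Fin (n + 1)) → Fin (m + 1) → ℝ := fun γ t => ∑ b ∈ Iic t, β γ b with hBdef
  have hvtop : GammaValid grp (gammaTop grp) := fun q => le_refl _
  have hvbot : GammaValid grp (fun _ => (0 : Fin (n+1))) := fun q => Nat.zero_le _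
  have hgs : ∀ γ, γ ∈ gammaSet grp ↔ GammaValid grp γ := by
    intro γ; simp [gammaSet, GammaValid]
  have hBnonneg : ∀ γ, GammaValid grp γ → ∀ t, 0 ≤ B γ t := by
    intro γ hγ t
    exact Finset.sum_nonneg fun b _ => (hprob γ hγ).1 b
  have hBle1 : ∀ γ, GammaValid grp γ → ∀ t, B γ t ≤ 1 := by
    intro γ hγ t
    rw [← (hprob γ hγ).2]
    exact Finset.sum_le_sum_of_subset_of_nonneg (subset_univ _) fun b _ _ => (hprob γ hγ).1 b
  have hBt : ∀ γ, GammaValid grp γ → ∀ s t : Fin (m+1), s ≤ t → B γ s ≤ B γ t := by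
    intro γ hγ s t hst
    exact Finset.sum_le_sum_of_subset_of_nonneg (Iic_subset_Iic.mpr hst)
      fun b _ _ => (hprob γ hγ).1 b
  have hIiclast : (Iic (Fin.last m)) = (univ : Finset (Fin (m+1))) := by
    ext b; simp [Fin.le_last]
  have hBlast : ∀ γ, GammaValid grp γ → B γ (Fin.last m) = 1 := by
    intro γ hγ
    show ∑ b ∈ Iic (Fin.last m), β γ b = 1
    rw [hIiclast]; exact (hprob γ hγ).2
  have hbotzero : ∀ b : Fin (m+1), b ≠ Fin.last m → β (fun _ => 0) b = 0 := by
    intro b hb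
    have hsum := (hprob _ hvbot).2
    have hnn := (hprob _ hvbot).1
    have herase : ∑ x ∈ univ.erase (Fin.last m), β (fun _ => 0) x = 0 := by
      have hadd := Finset.add_sum_erase univ (β (fun _ => 0)) (mem_univ (Fin.last m))
      rw [hbot, hsum] at hadd
      linarith
    have := (Finset.sum_eq_zero_iff_of_nonneg (fun x _ => hnn x)).mp herase
    exact this b (Finset.mem_erase.mpr ⟨hb, mem_univ b⟩)
  have hBbotzero : ∀ t : Fin (m+1), t < Fin.last m → B (fun _ => 0) t = 0 := by
    intro t ht
    apply Finset.sum_eq_zero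
    intro b hb
    exact hbotzero b (ne_of_lt (lt_of_le_of_lt (mem_Iic.mp hb) ht))
  have hBtop1 : B (gammaTop grp) 0 = 1 := by
    show ∑ b ∈ Iic (0 : Fin (m+1)), β (gammaTop grp) b = 1
    have : Iic (0 : Fin (m+1)) = {0} := by ext b; simp [Fin.le_zero_iff]
    rw [this, Finset.sum_singleton, htopβ]
  have hαval : ∀ (P : Profile m n) (t : Fin (m+1)), GammaValid grp (alphaVec grp P t) := by
    intro P t q
    show (univ.filter fun i => grp i = q ∧ peak (P i) ≤ t).card ≤ gsize grp q
    exact card_le_card fun i hi => mem_filter.mpr ⟨(mem_filter.mp hi).1, (mem_filter.mp hi).2.1⟩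
  have hαle : ∀ (P : Profile m n) (s t : Fin (m+1)), s ≤ t →
      ∀ q, alphaVec grp P s q ≤ alphaVec grp P t q := by
    intro P s t hst q
    rw [Fin.le_def]
    show (univ.filter fun i => grp i = q ∧ peak (P i) ≤ s).card
      ≤ (univ.filter fun i => grp i = q ∧ peak (P i) ≤ t).card
    apply card_le_card
    intro i hi
    rw [mem_filter] at hi ⊢
    exact ⟨hi.1, hi.2.1, le_trans hi.2.2 hst⟩
  set C : Profile m n → Fin (m + 1) → ℝ := fun P t => B (alphaVec grp P t) t with hCdef
  have hCmono : ∀ (P : Profile m n) (s t : Fin (m+1)), s ≤ t → C P s ≤ C P t := by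
    intro P s t hst
    calc B (alphaVec grp P s) s ≤ B (alphaVec grp P t) s :=
          hmono _ _ (hαval P t) (hαval P s) (hαle P s t hst) s
      _ ≤ B (alphaVec grp P t) t := hBt _ (hαval P t) s t hst
  have hClast : ∀ P : Profile m n, C P (Fin.last m) = 1 := by
    intro P
    have hα : alphaVec grp P (Fin.last m) = gammaTop grp := by
      funext q
      apply Fin.ext
      show (univ.filter fun i => grp i = q ∧ peak (P i) ≤ Fin.last m).card = gsize grp q
      unfold gsize
      congr 1
      apply filter_congr
      intro i _
      simp [Fin.le_last]
    show B (alphaVec grp P (Fin.last m)) (Fin.last m) = 1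
    rw [hα]
    exact hBlast _ hvtop
  set Dv : Profile m n → Fin (m + 1) → ℝ := fun P t =>
    if (t : ℕ) = 0 then 0
    else C P ⟨(t : ℕ) - 1, Nat.lt_of_le_of_lt (Nat.sub_le _ _) t.isLt⟩ with hDvdef
  have hφ : ∀ (P : Profile m n) (t : Fin (m+1)), φ P t = C P t - Dv P t := by
    intro P t
    rw [hform P t]
    show B (alphaVec grp P t) t - _ = C P t - Dv P t
    congr 1
    by_cases h0 : (t : ℕ) = 0
    · have ht0 : t = 0 := Fin.ext h0
      have : Iio t = (∅ : Finset (Fin (m+1))) := by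
        ext b; simp [ht0]
      rw [this, Finset.sum_empty]
      simp only [hDvdef]
      rw [if_pos h0]
    · set t' : Fin (m+1) := ⟨(t : ℕ) - 1, Nat.lt_of_le_of_lt (Nat.sub_le _ _) t.isLt⟩ with ht'
      have hIio : Iio t = Iic t' := by
        ext b
        simp only [mem_Iio, mem_Iic, Fin.lt_def, Fin.le_def, ht']
        omega
      have hαlt : alphaLtVec grp P t = alphaVec grp P t' := by
        funext q
        apply Fin.ext
        show (univ.filter fun i => grp i = q ∧ peak (P i) < t).card
          = (univ.filter fun i => grp i = q ∧ peak (P i) ≤ t').card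
        congr 1
        apply filter_congr
        intro i _
        have : peak (P i) < t ↔ peak (P i) ≤ t' := by
          rw [Fin.lt_def, Fin.le_def]
          simp only [ht']
          omega
        simp [this]
      rw [hIio, hαlt]
      simp only [hDvdef]
      rw [if_neg h0]
  -- ### the breakpoint set V
  set V : Finset ℝ :=
    insert 0 (((gammaSet grp) ×ˢ (univ : Finset (Fin (m+1)))).image fun p => B p.1 p.2) with hVdef
  have h0V : (0:ℝ) ∈ V := mem_insert_self _ _
  have hBmem : ∀ γ, GammaValid grp γ → ∀ t, B γ t ∈ V := by
    intro γ hγ t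
    apply mem_insert_of_mem
    exact mem_image.mpr ⟨(γ, t), mem_product.mpr ⟨(hgs γ).mpr hγ, mem_univ t⟩, rfl⟩
  have h1V : (1:ℝ) ∈ V := by
    rw [← hBtop1]
    exact hBmem _ hvtop 0
  have hVnn : ∀ x ∈ V, (0:ℝ) ≤ x := by
    intro x hx
    rw [hVdef, mem_insert] at hx
    rcases hx with rfl | hx
    · exact le_refl 0
    · obtain ⟨p, hp, rfl⟩ := mem_image.mp hx
      exact hBnonneg p.1 ((hgs p.1).mp (mem_product.mp hp).1) p.2
  have hVle1 : ∀ x ∈ V, x ≤ (1:ℝ) := by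
    intro x hx
    rw [hVdef, mem_insert] at hx
    rcases hx with rfl | hx
    · exact zero_le_one
    · obtain ⟨p, hp, rfl⟩ := mem_image.mp hx
      exact hBle1 p.1 ((hgs p.1).mp (mem_product.mp hp).1) p.2
  have hCmem : ∀ (P : Profile m n) t, C P t ∈ V := fun P t => hBmem _ (hαval P t) t
  have hVne : V.Nonempty := ⟨0, h0V⟩
  set k := V.card - 1 with hkdef
  have hk : V.card = k + 1 := (Nat.succ_pred_eq_of_pos (card_pos.mpr hVne)).symm
  set e := V.orderIsoOfFin hk with hedef
  set v : Fin (k+1) → ℝ := fun i => (e i : ℝ) with hvdef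
  have hvmono : Monotone v := fun i j hij => Subtype.coe_le_coe.mpr (e.monotone hij)
  have hvstrict : StrictMono v := fun i j hij => Subtype.coe_lt_coe.mpr (e.strictMono hij)
  have hvmem : ∀ i, v i ∈ V := fun i => (e i).2
  have hvsurj : ∀ x, (hx : x ∈ V) → v (e.symm ⟨x, hx⟩) = x := by
    intro x hx
    simp only [hvdef]
    rw [OrderIso.apply_symm_apply]
  have hv0 : v 0 = 0 := by
    obtain ⟨i0, hi0⟩ : ∃ i, v i = 0 := ⟨e.symm ⟨0, h0V⟩, hvsurj 0 h0V⟩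
    have h1 : v 0 ≤ v i0 := hvmono (Fin.zero_le _)
    have h2 : (0:ℝ) ≤ v 0 := hVnn _ (hvmem 0)
    rw [hi0] at h1
    linarith
  have hvlast : v (Fin.last k) = 1 := by
    obtain ⟨i1, hi1⟩ : ∃ i, v i = 1 := ⟨e.symm ⟨1, h1V⟩, hvsurj 1 h1V⟩
    have h1 : v i1 ≤ v (Fin.last k) := hvmono (Fin.le_last _)
    have h2 : v (Fin.last k) ≤ 1 := hVle1 _ (hvmem _)
    rw [hi1] at h1
    linarith
  set f : ℕ → ℝ := fun i => v ⟨min i k, Nat.lt_succ_of_le (Nat.min_le_right _ _)⟩ with hfdef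
  have hfv : ∀ i : Fin (k+1), f (i : ℕ) = v i := by
    intro i
    simp only [hfdef]
    congr 1
    apply Fin.ext
    simp only
    omega
  -- ### quantiles
  set Q : ℝ → (Fin g → Fin (n + 1)) → Fin (m + 1) := fun lam γ =>
    if hne : (univ.filter fun t => lam ≤ B γ t).Nonempty
    then (univ.filter fun t => lam ≤ B γ t).min' hne else Fin.last m with hQdef
  have hQmin : ∀ (lam : ℝ) γ (s : Fin (m+1)), lam ≤ B γ s → Q lam γ ≤ s := by
    intro lam γ s hs
    have hne : (univ.filter fun t => lam ≤ B γ t).Nonempty :=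
      ⟨s, mem_filter.mpr ⟨mem_univ _, hs⟩⟩
    simp only [hQdef]
    rw [dif_pos hne]
    exact min'_le _ s (mem_filter.mpr ⟨mem_univ _, hs⟩)
  have hQmem : ∀ (lam : ℝ), lam ≤ 1 → ∀ γ, GammaValid grp γ → lam ≤ B γ (Q lam γ) := by
    intro lam hlam γ hγ
    have hne : (univ.filter fun t => lam ≤ B γ t).Nonempty :=
      ⟨Fin.last m, mem_filter.mpr ⟨mem_univ _, by rw [hBlast γ hγ]; exact hlam⟩⟩
    have hQeq : Q lam γ = (univ.filter fun t => lam ≤ B γ t).min' hne := by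
      simp only [hQdef]; rw [dif_pos hne]
    rw [hQeq]
    exact (mem_filter.mp (min'_mem _ hne)).2
  set qc : ℝ → Profile m n → Fin (m + 1) := fun lam P =>
    if hne : (univ.filter fun t => lam ≤ C P t).Nonempty
    then (univ.filter fun t => lam ≤ C P t).min' hne else Fin.last m with hqcdef
  have hqcmin : ∀ (lam : ℝ) (P : Profile m n) (s : Fin (m+1)), lam ≤ C P s → qc lam P ≤ s := by
    intro lam P s hs
    have hne : (univ.filter fun t => lam ≤ C P t).Nonempty :=
      ⟨s, mem_filter.mpr ⟨mem_univ _, hs⟩⟩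
    simp only [hqcdef]
    rw [dif_pos hne]
    exact min'_le _ s (mem_filter.mpr ⟨mem_univ _, hs⟩)
  have hqcmem : ∀ (lam : ℝ), lam ≤ 1 → ∀ P : Profile m n, lam ≤ C P (qc lam P) := by
    intro lam hlam P
    have hne : (univ.filter fun t => lam ≤ C P t).Nonempty :=
      ⟨Fin.last m, mem_filter.mpr ⟨mem_univ _, by rw [hClast P]; exact hlam⟩⟩
    have hq : qc lam P = (univ.filter fun t => lam ≤ C P t).min' hne := by
      simp only [hqcdef]; rw [dif_pos hne]
    rw [hq]
    exact (mem_filter.mp (min'_mem _ hne)).2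
  have hqceq : ∀ (lam : ℝ), 0 < lam → lam ≤ 1 → ∀ (P : Profile m n) (t : Fin (m+1)),
      (qc lam P = t ↔ Dv P t < lam ∧ lam ≤ C P t) := by
    intro lam hl0 hl1 P t
    constructor
    · rintro rfl
      refine ⟨?_, hqcmem lam hl1 P⟩
      by_cases h0 : ((qc lam P : Fin (m+1)) : ℕ) = 0
      · simp only [hDvdef]; rw [if_pos h0]; exact hl0
      · simp only [hDvdef]; rw [if_neg h0]
        by_contra hnot
        push_neg at hnot
        have hle := hqcmin lam P _ hnot
        rw [Fin.le_def] at hle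
        simp only at hle
        omega
    · rintro ⟨hD, hC⟩
      have h1 : qc lam P ≤ t := hqcmin lam P t hC
      rcases eq_or_lt_of_le h1 with heq | hlt
      · exact heq
      · exfalso
        have h0 : (t : ℕ) ≠ 0 := by
          intro h0
          rw [Fin.lt_def, h0] at hlt
          omega
        set t' : Fin (m+1) := ⟨(t : ℕ) - 1, Nat.lt_of_le_of_lt (Nat.sub_le _ _) t.isLt⟩ with ht'
        have hle' : qc lam P ≤ t' := by
          rw [Fin.le_def]
          rw [Fin.lt_def] at hlt
          simp only [ht']
          omega
        have : lam ≤ C P t' := le_trans (hqcmem lam hl1 P) (hCmono P _ _ hle')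
        simp only [hDvdef] at hD
        rw [if_neg h0] at hD
        linarith
  -- ### deterministic parameters and rules
  set bd : Fin k → (Fin g → Fin (n + 1)) → Fin (m + 1) := fun j => Q (v j.succ) with hbddef
  set Fd : Fin k → Profile m n → Fin (m + 1) := fun j P => gmmrOutcome grp (bd j) P with hFddef
  have hlampos : ∀ j : Fin k, 0 < v j.succ := by
    intro j
    rw [← hv0]
    exact hvstrict (Fin.succ_pos j)
  have hlamle1 : ∀ j : Fin k, v j.succ ≤ 1 := by
    intro j
    rw [← hvlast]
    exact hvmono (Fin.le_last _)
  have hparams : ∀ j : Fin k, GMMRParams grp (bd j) := by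
    intro j
    refine ⟨?_, ?_, ?_⟩
    · have h1 : (v j.succ : ℝ) ≤ B (fun _ => 0) (Q (v j.succ) (fun _ => 0)) :=
        hQmem _ (hlamle1 j) _ hvbot
      show Q (v j.succ) (fun _ => 0) = Fin.last m
      by_contra hne
      have hlt : Q (v j.succ) (fun _ => 0) < Fin.last m :=
        lt_of_le_of_ne (Fin.le_last _) hne
      rw [hBbotzero _ hlt] at h1
      exact absurd h1 (not_le.mpr (hlampos j))
    · show Q (v j.succ) (gammaTop grp) = 0
      have := hQmin (v j.succ) (gammaTop grp) 0 (by rw [hBtop1]; exact hlamle1 j)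
      exact Fin.le_zero_iff.mp this
    · intro γ γ' hγ hγ' hle
      show Q (v j.succ) γ ≤ Q (v j.succ) γ'
      apply hQmin
      calc (v j.succ : ℝ) ≤ B γ' (Q (v j.succ) γ') := hQmem _ (hlamle1 j) γ' hγ'
        _ ≤ B γ (Q (v j.succ) γ') := hmono γ γ' hγ hγ' hle _
  have hFd : ∀ (j : Fin k) (P : Profile m n), Fd j P = qc (v j.succ) P := by
    intro j P
    show gmmrOutcome grp (bd j) P = qc (v j.succ) P
    unfold gmmrOutcome
    apply le_antisymm
    · have hγ0mem : alphaVec grp P (qc (v j.succ) P) ∈ gammaSet grp :=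
        (hgs _).mpr (hαval P _)
      refine le_trans (Finset.inf'_le _ hγ0mem) ?_
      apply Finset.max'_le
      intro y hy
      rw [mem_insert] at hy
      rcases hy with rfl | hy
      · show Q (v j.succ) _ ≤ _
        apply hQmin
        exact hqcmem _ (hlamle1 j) P
      · obtain ⟨q, _, rfl⟩ := mem_image.mp hy
        refine (tau_le_iff grp P q _ (hαval P _ q) _).mpr ?_
        exact le_refl _
    · apply Finset.le_inf'
      intro γ hγmem
      have hγ : GammaValid grp γ := (hgs γ).mp hγmem
      set s := (insert (bd j γ) (univ.image fun q => tau grp P q ((γ q : ℕ)))).max'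
        (insert_nonempty _ _) with hsdef
      have h1 : bd j γ ≤ s := by
        rw [hsdef]
        exact le_max' _ _ (mem_insert_self _ _)
      have h2 : (v j.succ : ℝ) ≤ B γ s :=
        le_trans (hQmem _ (hlamle1 j) γ hγ) (hBt γ hγ _ _ h1)
      have h3 : ∀ q, γ q ≤ alphaVec grp P s q := by
        intro q
        rw [Fin.le_def]
        refine (tau_le_iff grp P q (γ q) (hγ q) s).mp ?_
        rw [hsdef]
        have hmem : tau grp P q ((γ q : ℕ)) ∈
            insert (bd j γ) (univ.image fun q' => tau grp P q' ((γ q' : ℕ))) :=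
          mem_insert_of_mem (mem_image.mpr ⟨q, mem_univ q, rfl⟩)
        exact le_max' _ _ hmem
      apply hqcmin
      calc (v j.succ : ℝ) ≤ B γ s := h2
        _ ≤ B (alphaVec grp P s) s := hmono _ _ (hαval P s) hγ h3 s
  -- ### assembly
  set lamd : Fin k → ℝ := fun j => f ((j : ℕ) + 1) - f (j : ℕ) with hlamddef
  have hfcs : ∀ j : Fin k, f (j : ℕ) = v j.castSucc := by
    intro j
    have := hfv j.castSucc
    rwa [Fin.coe_castSucc] at this
  have hfsucc : ∀ j : Fin k, f ((j : ℕ) + 1) = v j.succ := by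
    intro j
    have := hfv j.succ
    rwa [Fin.val_succ] at this
  refine ⟨k, lamd, Fd, ⟨?_, ?_, ?_⟩, ?_⟩
  · intro w
    show 0 ≤ f ((w : ℕ) + 1) - f (w : ℕ)
    rw [hfcs w, hfsucc w, sub_nonneg]
    exact hvmono (Fin.castSucc_le_succ w)
  · show ∑ w : Fin k, (f ((w : ℕ) + 1) - f (w : ℕ)) = 1
    rw [Fin.sum_univ_eq_sum_range (fun i => f (i + 1) - f i) k]
    rw [Finset.sum_range_sub f k]
    have hfk : f k = 1 := by
      have := hfv (Fin.last k)
      simp only [Fin.val_last] at this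
      rw [this, hvlast]
    have hf0 : f 0 = 0 := by
      have := hfv (0 : Fin (k+1))
      simp only [Fin.val_zero] at this
      rw [this, hv0]
    rw [hfk, hf0, sub_zero]
  · intro P t
    have hDmem : Dv P t ∈ V := by
      by_cases h0 : (t : ℕ) = 0
      · simp only [hDvdef]; rw [if_pos h0]; exact h0V
      · simp only [hDvdef]; rw [if_neg h0]; exact hCmem P _
    have hDC : Dv P t ≤ C P t := by
      by_cases h0 : (t : ℕ) = 0
      · simp only [hDvdef]; rw [if_pos h0]
        exact hBnonneg _ (hαval P t) t
      · simp only [hDvdef]; rw [if_neg h0]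
        apply hCmono
        rw [Fin.le_def]
        simp only
        omega
    set a : Fin (k+1) := e.symm ⟨Dv P t, hDmem⟩ with hadef
    set b : Fin (k+1) := e.symm ⟨C P t, hCmem P t⟩ with hbdef
    have hva : v a = Dv P t := hvsurj _ hDmem
    have hvb : v b = C P t := hvsurj _ (hCmem P t)
    have hab : (a : ℕ) ≤ (b : ℕ) := by
      have : a ≤ b := e.symm.monotone (Subtype.mk_le_mk.mpr hDC)
      exact this
    have hbk : (b : ℕ) ≤ k := Nat.lt_succ_iff.mp b.isLt
    have hterm : ∀ w : Fin k, lamd w * (if Fd w P = t then (1:ℝ) else 0)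
        = if (a : ℕ) ≤ (w : ℕ) ∧ (w : ℕ) + 1 ≤ (b : ℕ) then f ((w:ℕ)+1) - f (w:ℕ) else 0 := by
      intro w
      have hiff : Fd w P = t ↔ ((a : ℕ) ≤ (w : ℕ) ∧ (w : ℕ) + 1 ≤ (b : ℕ)) := by
        rw [hFd w P, hqceq _ (hlampos w) (hlamle1 w) P t]
        rw [← hva, ← hvb]
        constructor
        · rintro ⟨h1, h2⟩
          have ha' : a < w.succ := hvstrict.lt_iff_lt.mp h1
          have hb' : w.succ ≤ b := (hvstrict.le_iff_le).mp h2
          rw [Fin.lt_def, Fin.val_succ] at ha'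
          rw [Fin.le_def, Fin.val_succ] at hb'
          omega
        · rintro ⟨h1, h2⟩
          constructor
          · apply hvstrict
            rw [Fin.lt_def, Fin.val_succ]
            omega
          · apply hvmono
            rw [Fin.le_def, Fin.val_succ]
            omega
      by_cases hcond : Fd w P = t
      · rw [if_pos hcond, mul_one, if_pos (hiff.mp hcond)]
      · rw [if_neg hcond, mul_zero, if_neg (fun hc => hcond (hiff.mpr hc))]
    calc φ P t = C P t - Dv P t := hφ P t
      _ = ∑ w : Fin k, lamd w * (if Fd w P = t then (1:ℝ) else 0) := by
          rw [Finset.sum_congr rfl fun w _ => hterm w]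
          rw [Fin.sum_univ_eq_sum_range
            (fun i => if (a : ℕ) ≤ i ∧ i + 1 ≤ (b : ℕ) then f (i+1) - f i else 0) k]
          rw [← Finset.sum_filter]
          have hset : (Finset.range k).filter (fun i => (a : ℕ) ≤ i ∧ i + 1 ≤ (b : ℕ))
              = Finset.Ico (a : ℕ) (b : ℕ) := by
            ext i
            simp only [Finset.mem_filter, Finset.mem_range, Finset.mem_Ico]
            omega
          rw [hset, Finset.sum_Ico_eq_sub _ hab, Finset.sum_range_sub f, Finset.sum_range_sub f]
          have hfa : f (a : ℕ) = Dv P t := by rw [hfv a, hva]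
          have hfb : f (b : ℕ) = C P t := by rw [hfv b, hvb]
          rw [hfa, hfb]
          ring
  · intro w
    exact ⟨bd w, hparams w, fun P => rfl⟩
end
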